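/- arXiv:1512.07486 — 5 statements merged into one kernel-verified Lean document; each statement's English description precedes it below -/
import Mathlib

section
/- (Additivity of Δ_Z) Let ρ₁ be a density matrix on ℂ^{d_{A₁}} ⊗ ℂ^{d_{B₁}} and ρ₂ a density matrix on ℂ^{d_{A₂}} ⊗ ℂ^{d_{B₂}}. Regard the Kronecker product ρ₁ ⊗ ρ₂ as a density matrix on ℂ^{d_{A₁}d_{A₂}} ⊗ ℂ^{d_{B₁}d_{B₂}} via the index bijection ((a₁,b₁),(a₂,b₂)) ↦ ((a₁,a₂),(b₁,b₂)), and take as incoherent basis on A₁A₂ the product computational basis. Then Δ_{Z}(ρ₁ ⊗ ρ₂) = Δ_{Z₁}(ρ₁) + Δ_{Z₂}(ρ₂). In particular, for n identical copies, Δ_Z(ρ^{⊗n}) = n·Δ_Z(ρ). -/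
open scoped Classical ComplexOrder
open Matrix Kronecker BigOperators Polynomial

noncomputable section

/-- The von Neumann entropy (in bits) of a matrix: `-∑ᵢ λᵢ log₂ λᵢ` over its eigenvalues
(with the convention `0 · log₂ 0 = 0`); junk value `0` if the matrix is not Hermitian. -/
noncomputable def vnEntropy {n : Type*} [Fintype n] [DecidableEq n]
    (ρ : Matrix n n ℂ) : ℝ :=
  if h : ρ.IsHermitian then -∑ i, h.eigenvalues i * Real.logb 2 (h.eigenvalues i) else 0

/-- A density matrix: positive semidefinite with unit trace. -/
def IsDensity {n : Type*} [Fintype n] (ρ : Matrix n n ℂ) : Prop :=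
  ρ.PosSemidef ∧ ρ.trace = 1

/-- The dephasing (pinching) map on subsystem `A` with respect to the computational basis:
`Δ(ρ) = ∑ c (|c⟩⟨c| ⊗ I_B) ρ (|c⟩⟨c| ⊗ I_B)`. -/
noncomputable def dephA {A B : Type*} [Fintype A] [DecidableEq A] [Fintype B] [DecidableEq B]
    (ρ : Matrix (A × B) (A × B) ℂ) : Matrix (A × B) (A × B) ℂ :=
  ∑ c : A, (Matrix.single c c (1 : ℂ) ⊗ₖ (1 : Matrix B B ℂ)) * ρ *
    (Matrix.single c c (1 : ℂ) ⊗ₖ (1 : Matrix B B ℂ))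

/-- The monotone `Δ_Z(ρ) = S(Δ(ρ)) − S(ρ)`. -/
noncomputable def DeltaZ {A B : Type*} [Fintype A] [DecidableEq A] [Fintype B] [DecidableEq B]
    (ρ : Matrix (A × B) (A × B) ℂ) : ℝ :=
  vnEntropy (dephA ρ) - vnEntropy ρ

lemma charpoly_conj_aux {n : Type*} [Fintype n] [DecidableEq n]
    (U V M : Matrix n n ℂ) (hUV : U * V = 1) (hVU : V * U = 1) :
    (U * M * V).charpoly = M.charpoly := by
  have key : charmatrix (U * M * V) =
      U.map Polynomial.C * charmatrix M * V.map Polynomial.C := by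
    unfold charmatrix
    rw [mul_sub, sub_mul]
    congr 1
    · have h1 : (U.map (Polynomial.C : ℂ → ℂ[X])) * Matrix.scalar n (X : ℂ[X]) =
          Matrix.scalar n (X : ℂ[X]) * U.map Polynomial.C := by
        exact ((Matrix.scalar_commute (X : ℂ[X]) (fun r => Commute.all _ r)
          (U.map Polynomial.C)).eq).symm
      rw [h1, mul_assoc, ← Matrix.map_mul (f := (Polynomial.C : ℂ →+* ℂ[X])), hUV]
      simp
    · simp only [RingHom.mapMatrix_apply]
      rw [Matrix.map_mul (f := (Polynomial.C : ℂ →+* ℂ[X])),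
        Matrix.map_mul (f := (Polynomial.C : ℂ →+* ℂ[X]))]
  unfold Matrix.charpoly
  rw [key, det_mul, det_mul]
  have : (U.map (Polynomial.C : ℂ → ℂ[X])).det * (V.map (Polynomial.C : ℂ → ℂ[X])).det
      = 1 := by
    rw [← det_mul, ← Matrix.map_mul (f := (Polynomial.C : ℂ →+* ℂ[X])), hUV]
    simp
  calc (U.map (Polynomial.C : ℂ → ℂ[X])).det * (charmatrix M).det *
        (V.map (Polynomial.C : ℂ → ℂ[X])).det
      = (U.map (Polynomial.C : ℂ → ℂ[X])).det *
        (V.map (Polynomial.C : ℂ → ℂ[X])).det * (charmatrix M).det := by ring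
    _ = (charmatrix M).det := by rw [this, one_mul]

lemma charpoly_diagonal {n : Type*} [Fintype n] [DecidableEq n] (v : n → ℂ) :
    (Matrix.diagonal v).charpoly =
      ((Finset.univ.val.map v).map fun a => (X : ℂ[X]) - Polynomial.C a).prod := by
  have key : charmatrix (Matrix.diagonal v) =
      Matrix.diagonal fun i => (X : ℂ[X]) - Polynomial.C (v i) := by
    ext i j
    by_cases h : i = j
    · subst h; simp
    · simp [h, Matrix.diagonal_apply_ne _ h]
  rw [Matrix.charpoly, key, det_diagonal]
  rw [Finset.prod_eq_multiset_prod, Multiset.map_map]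
  rfl

end

lemma hermitian_charpoly {n : Type*} [Fintype n] [DecidableEq n]
    {M : Matrix n n ℂ} (hM : M.IsHermitian) :
    M.charpoly = ((Finset.univ.val.map fun i => ((hM.eigenvalues i : ℝ) : ℂ)).map
      fun a => (X : ℂ[X]) - Polynomial.C a).prod := by
  have hU := hM.eigenvectorUnitary.2
  have hUV : (hM.eigenvectorUnitary : Matrix n n ℂ) * star (hM.eigenvectorUnitary : Matrix n n ℂ) = 1 :=
    (Matrix.mem_unitaryGroup_iff).mp hU
  have hVU : star (hM.eigenvectorUnitary : Matrix n n ℂ) * (hM.eigenvectorUnitary : Matrix n n ℂ) = 1 :=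
    (Matrix.mem_unitaryGroup_iff').mp hU
  have h1 : M.charpoly = (Matrix.diagonal (RCLike.ofReal ∘ hM.eigenvalues)).charpoly := by
    conv_lhs => rw [hM.spectral_theorem]
    exact charpoly_conj_aux _ _ _ hUV hVU
  rw [h1]
  have h2 : (RCLike.ofReal ∘ hM.eigenvalues : n → ℂ) = fun i => ((hM.eigenvalues i : ℝ) : ℂ) := rfl
  rw [h2, _root_.charpoly_diagonal]

lemma eigenvalues_multiset_eq {n κ : Type*} [Fintype n] [DecidableEq n] [Fintype κ]
    {M : Matrix n n ℂ} (hM : M.IsHermitian) (d : κ → ℝ)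
    (h : M.charpoly = ((Finset.univ.val.map fun i => ((d i : ℝ) : ℂ)).map
      fun a => (X : ℂ[X]) - Polynomial.C a).prod) :
    Finset.univ.val.map hM.eigenvalues = Finset.univ.val.map d := by
  have h3 := (hermitian_charpoly hM).symm.trans h
  have h4 := congrArg Polynomial.roots h3
  rw [Polynomial.roots_multiset_prod_X_sub_C, Polynomial.roots_multiset_prod_X_sub_C] at h4
  have h5 : (Finset.univ.val.map hM.eigenvalues).map (Complex.ofReal : ℝ → ℂ)
      = (Finset.univ.val.map d).map (Complex.ofReal : ℝ → ℂ) := by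
    rw [Multiset.map_map, Multiset.map_map]; exact h4
  exact Multiset.map_injective Complex.ofReal_injective h5

lemma sum_apply_eigenvalues {n κ : Type*} [Fintype n] [DecidableEq n] [Fintype κ]
    {M : Matrix n n ℂ} (hM : M.IsHermitian) (d : κ → ℝ)
    (h : M.charpoly = ((Finset.univ.val.map fun i => ((d i : ℝ) : ℂ)).map
      fun a => (X : ℂ[X]) - Polynomial.C a).prod) (g : ℝ → ℝ) :
    ∑ i, g (hM.eigenvalues i) = ∑ i, g (d i) := by
  have h5 := eigenvalues_multiset_eq hM d h
  have e1 : ∑ i, g (hM.eigenvalues i) = ((Finset.univ.val.map hM.eigenvalues).map g).sum := by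
    rw [Multiset.map_map]; rfl
  have e2 : ∑ i, g (d i) = ((Finset.univ.val.map d).map g).sum := by
    rw [Multiset.map_map]; rfl
  rw [e1, e2, h5]

lemma vnEntropy_eq_of_charpoly {n κ : Type*} [Fintype n] [DecidableEq n] [Fintype κ]
    {M : Matrix n n ℂ} (hM : M.IsHermitian) (d : κ → ℝ)
    (h : M.charpoly = ((Finset.univ.val.map fun i => ((d i : ℝ) : ℂ)).map
      fun a => (X : ℂ[X]) - Polynomial.C a).prod) :
    vnEntropy M = -∑ i, d i * Real.logb 2 (d i) := by
  rw [vnEntropy, dif_pos hM,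
    sum_apply_eigenvalues hM d h (fun x => x * Real.logb 2 x)]

lemma kron_conjTranspose {m n : Type*} [Fintype m] [Fintype n]
    (A : Matrix m m ℂ) (B : Matrix n n ℂ) : (A ⊗ₖ B)ᴴ = Aᴴ ⊗ₖ Bᴴ := by
  ext ⟨i, j⟩ ⟨k, l⟩
  simp [Matrix.conjTranspose_apply, Matrix.kroneckerMap_apply]

lemma isHermitian_kron {m n : Type*} [Fintype m] [Fintype n]
    {A : Matrix m m ℂ} {B : Matrix n n ℂ} (hA : A.IsHermitian) (hB : B.IsHermitian) :
    (A ⊗ₖ B).IsHermitian := by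
  unfold Matrix.IsHermitian
  rw [kron_conjTranspose, hA.eq, hB.eq]

lemma charpoly_kron {m n : Type*} [Fintype m] [DecidableEq m] [Fintype n] [DecidableEq n]
    {A : Matrix m m ℂ} {B : Matrix n n ℂ} (hA : A.IsHermitian) (hB : B.IsHermitian) :
    (A ⊗ₖ B).charpoly = ((Finset.univ.val.map fun p : m × n =>
        (((hA.eigenvalues p.1 * hB.eigenvalues p.2 : ℝ)) : ℂ)).map
      fun a => (X : ℂ[X]) - Polynomial.C a).prod := by
  set U := (hA.eigenvectorUnitary : Matrix m m ℂ) with hUdef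
  set V := (hB.eigenvectorUnitary : Matrix n n ℂ) with hVdef
  have hUV : U * star U = 1 := (Matrix.mem_unitaryGroup_iff).mp hA.eigenvectorUnitary.2
  have hVU : star U * U = 1 := (Matrix.mem_unitaryGroup_iff').mp hA.eigenvectorUnitary.2
  have hVV : V * star V = 1 := (Matrix.mem_unitaryGroup_iff).mp hB.eigenvectorUnitary.2
  have hVV' : star V * V = 1 := (Matrix.mem_unitaryGroup_iff').mp hB.eigenvectorUnitary.2
  have hstar : star (U ⊗ₖ V) = (star U) ⊗ₖ (star V) := kron_conjTranspose U V
  have hd : Matrix.diagonal (fun p : m × n =>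
        ((hA.eigenvalues p.1 * hB.eigenvalues p.2 : ℝ) : ℂ)) =
      (Matrix.diagonal (RCLike.ofReal ∘ hA.eigenvalues)) ⊗ₖ
        (Matrix.diagonal (RCLike.ofReal ∘ hB.eigenvalues)) := by
    rw [Matrix.diagonal_kronecker_diagonal]
    congr 1
    funext p
    push_cast
    rfl
  have hdecomp : A ⊗ₖ B = (U ⊗ₖ V) *
      Matrix.diagonal (fun p : m × n => ((hA.eigenvalues p.1 * hB.eigenvalues p.2 : ℝ) : ℂ)) *
      star (U ⊗ₖ V) := by
    rw [hstar, hd, ← Matrix.mul_kronecker_mul, ← Matrix.mul_kronecker_mul]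
    exact congrArg₂ (fun X Y => X ⊗ₖ Y) hA.spectral_theorem hB.spectral_theorem
  have hkUV : (U ⊗ₖ V) * star (U ⊗ₖ V) = 1 := by
    rw [hstar, ← Matrix.mul_kronecker_mul, hUV, hVV, Matrix.one_kronecker_one]
  have hkVU : star (U ⊗ₖ V) * (U ⊗ₖ V) = 1 := by
    rw [hstar, ← Matrix.mul_kronecker_mul, hVU, hVV', Matrix.one_kronecker_one]
  rw [hdecomp, charpoly_conj_aux _ _ _ hkUV hkVU, _root_.charpoly_diagonal]

lemma vnEntropy_reindex {n κ : Type*} [Fintype n] [DecidableEq n] [Fintype κ] [DecidableEq κ]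
    (e : n ≃ κ) {M : Matrix n n ℂ} (hM : M.IsHermitian) :
    vnEntropy (Matrix.reindex e e M) = vnEntropy M := by
  have hM' : (Matrix.reindex e e M).IsHermitian :=
    (Matrix.isHermitian_submatrix_equiv e.symm).mpr hM
  have h := hermitian_charpoly hM
  rw [← Matrix.charpoly_reindex e] at h
  rw [vnEntropy_eq_of_charpoly hM' _ h, vnEntropy, dif_pos hM]

lemma sum_eigenvalues_eq_one {n : Type*} [Fintype n] [DecidableEq n]
    {M : Matrix n n ℂ} (hM : M.IsHermitian) (htr : M.trace = 1) :
    ∑ i, hM.eigenvalues i = 1 := by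
  have hUV : star (hM.eigenvectorUnitary : Matrix n n ℂ) * (hM.eigenvectorUnitary : Matrix n n ℂ) = 1 :=
    (Matrix.mem_unitaryGroup_iff').mp hM.eigenvectorUnitary.2
  have h1 : M.trace = (Matrix.diagonal (RCLike.ofReal ∘ hM.eigenvalues)).trace := by
    conv_lhs => rw [hM.spectral_theorem]
    rw [Unitary.conjStarAlgAut_apply, Matrix.trace_mul_cycle, hUV, Matrix.one_mul]
  rw [htr, Matrix.trace_diagonal] at h1
  have h2 : ((1 : ℂ)) = ((∑ i, hM.eigenvalues i : ℝ) : ℂ) := by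
    rw [h1]; push_cast; rfl
  exact_mod_cast h2.symm

lemma entg_mul {x y : ℝ} (hx : 0 ≤ x) (hy : 0 ≤ y) :
    (x * y) * Real.logb 2 (x * y) =
      y * (x * Real.logb 2 x) + x * (y * Real.logb 2 y) := by
  rcases eq_or_lt_of_le hx with h | h
  · simp [← h]
  rcases eq_or_lt_of_le hy with h' | h'
  · simp [← h']
  rw [Real.logb_mul (ne_of_gt h) (ne_of_gt h')]
  ring

lemma vnEntropy_kron {m n : Type*} [Fintype m] [DecidableEq m] [Fintype n] [DecidableEq n]
    {A : Matrix m m ℂ} {B : Matrix n n ℂ}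
    (hA : A.PosSemidef) (ha : A.trace = 1) (hB : B.PosSemidef) (hb : B.trace = 1) :
    vnEntropy (A ⊗ₖ B) = vnEntropy A + vnEntropy B := by
  have hAH := hA.1
  have hBH := hB.1
  have hsumA : ∑ i, hAH.eigenvalues i = 1 := sum_eigenvalues_eq_one hAH ha
  have hsumB : ∑ j, hBH.eigenvalues j = 1 := sum_eigenvalues_eq_one hBH hb
  rw [vnEntropy_eq_of_charpoly (isHermitian_kron hAH hBH) _ (charpoly_kron hAH hBH),
    vnEntropy, dif_pos hAH, vnEntropy, dif_pos hBH]
  have key : ∑ p : m × n, (hAH.eigenvalues p.1 * hBH.eigenvalues p.2) *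
        Real.logb 2 (hAH.eigenvalues p.1 * hBH.eigenvalues p.2)
      = (∑ i, hAH.eigenvalues i * Real.logb 2 (hAH.eigenvalues i))
        + (∑ j, hBH.eigenvalues j * Real.logb 2 (hBH.eigenvalues j)) := by
    rw [Fintype.sum_prod_type]
    have step : ∀ i, ∑ j, (hAH.eigenvalues i * hBH.eigenvalues j) *
          Real.logb 2 (hAH.eigenvalues i * hBH.eigenvalues j)
        = (hAH.eigenvalues i * Real.logb 2 (hAH.eigenvalues i))
          + hAH.eigenvalues i * (∑ j, hBH.eigenvalues j * Real.logb 2 (hBH.eigenvalues j)) := by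
      intro i
      have : ∀ j, (hAH.eigenvalues i * hBH.eigenvalues j) *
            Real.logb 2 (hAH.eigenvalues i * hBH.eigenvalues j)
          = hBH.eigenvalues j * (hAH.eigenvalues i * Real.logb 2 (hAH.eigenvalues i))
            + hAH.eigenvalues i * (hBH.eigenvalues j * Real.logb 2 (hBH.eigenvalues j)) :=
        fun j => entg_mul (hA.eigenvalues_nonneg i) (hB.eigenvalues_nonneg j)
      rw [Finset.sum_congr rfl (fun j _ => this j), Finset.sum_add_distrib,
        ← Finset.sum_mul, hsumB, one_mul, ← Finset.mul_sum]
    rw [Finset.sum_congr rfl (fun i _ => step i), Finset.sum_add_distrib,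
      ← Finset.sum_mul, hsumA, one_mul]
  rw [key]
  ring

lemma proj_mul_mul {A B : Type*} [Fintype A] [DecidableEq A] [Fintype B] [DecidableEq B]
    (c : A) (ρ : Matrix (A × B) (A × B) ℂ) (x y : A × B) :
    ((Matrix.single c c (1 : ℂ) ⊗ₖ (1 : Matrix B B ℂ)) * ρ *
      (Matrix.single c c (1 : ℂ) ⊗ₖ (1 : Matrix B B ℂ))) x y =
    if x.1 = c ∧ y.1 = c then ρ x y else 0 := by
  rcases x with ⟨a, b⟩
  rcases y with ⟨a', b'⟩
  simp [Matrix.mul_apply, Matrix.kroneckerMap_apply, Matrix.single_apply, Matrix.one_apply,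
    Fintype.sum_prod_type, ite_and, Finset.sum_ite_eq, Finset.sum_ite_eq', mul_ite, ite_mul,
    and_comm, eq_comm]
  by_cases h1 : c = a <;> by_cases h2 : c = a' <;> simp_all

lemma dephA_apply {A B : Type*} [Fintype A] [DecidableEq A] [Fintype B] [DecidableEq B]
    (ρ : Matrix (A × B) (A × B) ℂ) (x y : A × B) :
    dephA ρ x y = if x.1 = y.1 then ρ x y else 0 := by
  rw [dephA, Matrix.sum_apply]
  rw [Finset.sum_congr rfl (fun c _ => proj_mul_mul c ρ x y)]
  by_cases h : x.1 = y.1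
  · rw [if_pos h]
    rw [Finset.sum_eq_single x.1]
    · simp [h]
    · intro c _ hc
      rw [if_neg]
      rintro ⟨rfl, -⟩
      exact hc rfl
    · intro habs
      exact absurd (Finset.mem_univ _) habs
  · rw [if_neg h]
    apply Finset.sum_eq_zero
    intro c _
    rw [if_neg]
    rintro ⟨rfl, h2⟩
    exact h h2.symm

lemma proj_hermitian {A B : Type*} [Fintype A] [DecidableEq A] [Fintype B] [DecidableEq B]
    (c : A) : ((Matrix.single c c (1 : ℂ) ⊗ₖ (1 : Matrix B B ℂ))ᴴ : Matrix (A × B) (A × B) ℂ)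
      = Matrix.single c c (1 : ℂ) ⊗ₖ (1 : Matrix B B ℂ) := by
  rw [kron_conjTranspose]
  have h1 : (Matrix.single c c (1 : ℂ))ᴴ = Matrix.single c c (1 : ℂ) := by
    ext i j
    simp [Matrix.conjTranspose_apply, Matrix.single_apply, and_comm, eq_comm]
  rw [h1, Matrix.conjTranspose_one]

lemma dephA_posSemidef {A B : Type*} [Fintype A] [DecidableEq A] [Fintype B] [DecidableEq B]
    {ρ : Matrix (A × B) (A × B) ℂ} (hρ : ρ.PosSemidef) : (dephA ρ).PosSemidef := by
  rw [dephA]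
  refine Finset.sum_induction _ Matrix.PosSemidef
    (fun a b ha hb => ha.add hb) Matrix.PosSemidef.zero ?_
  intro c _
  have := hρ.conjTranspose_mul_mul_same (Matrix.single c c (1 : ℂ) ⊗ₖ (1 : Matrix B B ℂ))
  rwa [proj_hermitian] at this

lemma dephA_trace {A B : Type*} [Fintype A] [DecidableEq A] [Fintype B] [DecidableEq B]
    (ρ : Matrix (A × B) (A × B) ℂ) : (dephA ρ).trace = ρ.trace := by
  rw [Matrix.trace, Matrix.trace]
  apply Finset.sum_congr rfl
  intro x _
  rw [Matrix.diag_apply, Matrix.diag_apply, dephA_apply, if_pos rfl]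

lemma dephA_isDensity {A B : Type*} [Fintype A] [DecidableEq A] [Fintype B] [DecidableEq B]
    {ρ : Matrix (A × B) (A × B) ℂ} (hρ : IsDensity ρ) : IsDensity (dephA ρ) :=
  ⟨dephA_posSemidef hρ.1, by rw [dephA_trace]; exact hρ.2⟩

lemma dephA_kron_reindex {A1 B1 A2 B2 : Type*}
    [Fintype A1] [DecidableEq A1] [Fintype B1] [DecidableEq B1]
    [Fintype A2] [DecidableEq A2] [Fintype B2] [DecidableEq B2]
    (ρ1 : Matrix (A1 × B1) (A1 × B1) ℂ) (ρ2 : Matrix (A2 × B2) (A2 × B2) ℂ) :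
    dephA (Matrix.reindex (Equiv.prodProdProdComm A1 B1 A2 B2)
        (Equiv.prodProdProdComm A1 B1 A2 B2) (ρ1 ⊗ₖ ρ2))
      = Matrix.reindex (Equiv.prodProdProdComm A1 B1 A2 B2)
        (Equiv.prodProdProdComm A1 B1 A2 B2) (dephA ρ1 ⊗ₖ dephA ρ2) := by
  ext ⟨⟨a1, a2⟩, ⟨b1, b2⟩⟩ ⟨⟨a1', a2'⟩, ⟨b1', b2'⟩⟩
  rw [dephA_apply]
  simp only [Matrix.reindex_apply, Matrix.submatrix_apply, Equiv.prodProdProdComm_symm,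
    Equiv.prodProdProdComm_apply, Matrix.kroneckerMap_apply]
  rw [dephA_apply, dephA_apply]
  by_cases h1 : a1 = a1' <;> by_cases h2 : a2 = a2' <;>
    simp [h1, h2, Prod.ext_iff]

/-- **Additivity of `Δ_Z`.** For density matrices `ρ₁` on
`ℂ^{d_{A₁}} ⊗ ℂ^{d_{B₁}}` and `ρ₂` on `ℂ^{d_{A₂}} ⊗ ℂ^{d_{B₂}}`, regarding the Kronecker
product `ρ₁ ⊗ ρ₂` as a state on `ℂ^{d_{A₁}d_{A₂}} ⊗ ℂ^{d_{B₁}d_{B₂}}` via the index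
bijection `((a₁,b₁),(a₂,b₂)) ↦ ((a₁,a₂),(b₁,b₂))` (with the product computational basis
as the incoherent basis on `A₁A₂`), we have `Δ_Z(ρ₁ ⊗ ρ₂) = Δ_{Z₁}(ρ₁) + Δ_{Z₂}(ρ₂)`. -/
theorem DeltaZ_additive (dA1 dB1 dA2 dB2 : ℕ)
    (ρ1 : Matrix (Fin dA1 × Fin dB1) (Fin dA1 × Fin dB1) ℂ) (h1 : IsDensity ρ1)
    (ρ2 : Matrix (Fin dA2 × Fin dB2) (Fin dA2 × Fin dB2) ℂ) (h2 : IsDensity ρ2) :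
    DeltaZ (Matrix.reindex
        (Equiv.prodProdProdComm (Fin dA1) (Fin dB1) (Fin dA2) (Fin dB2))
        (Equiv.prodProdProdComm (Fin dA1) (Fin dB1) (Fin dA2) (Fin dB2))
        (ρ1 ⊗ₖ ρ2)) = DeltaZ ρ1 + DeltaZ ρ2 := by
  have hd1 : IsDensity (dephA ρ1) := dephA_isDensity h1
  have hd2 : IsDensity (dephA ρ2) := dephA_isDensity h2
  rw [DeltaZ, dephA_kron_reindex,
    vnEntropy_reindex _ (isHermitian_kron hd1.1.1 hd2.1.1),
    vnEntropy_reindex _ (isHermitian_kron h1.1.1 h2.1.1),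
    vnEntropy_kron hd1.1 hd1.2 hd2.1 hd2.2,
    vnEntropy_kron h1.1 h1.2 h2.1 h2.2, DeltaZ, DeltaZ]
  ring
end

section
/- (Faithfulness of Δ_Z) For every density matrix ρ on ℂ^{d_A} ⊗ ℂ^{d_B}, one has Δ_Z(ρ) ≥ 0, and Δ_Z(ρ) = 0 if and only if ρ ∈ CQ_Z (equivalently, if and only if ρ = Δ(ρ)). -/
open scoped Classical ComplexOrder
open Matrix Kronecker BigOperators

noncomputable section

/-- The classical-quantum states with respect to the computational basis on `A`:
`σ = ∑ c p_c |c⟩⟨c| ⊗ ρ_c` with `p_c ≥ 0`, `∑ c p_c = 1` and each `ρ_c` a density matrix. -/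
def IsCQ {A B : Type*} [Fintype A] [DecidableEq A] [Fintype B] [DecidableEq B]
    (σ : Matrix (A × B) (A × B) ℂ) : Prop :=
  ∃ (p : A → ℝ) (τ : A → Matrix B B ℂ),
    (∀ c, 0 ≤ p c) ∧ (∑ c, p c = 1) ∧
    (∀ c, (τ c).PosSemidef ∧ (τ c).trace = 1) ∧
    σ = ∑ c, (p c : ℂ) • (Matrix.single c c (1 : ℂ) ⊗ₖ τ c)

/-! ### Auxiliary lemmas -/

/-- Tangent-line bound for `x ↦ x * log x`. -/
lemma pt_tangent (x y : ℝ) (hx : 0 ≤ x) (hy : 0 < y) :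
    x * Real.log y - y + x ≤ x * Real.log x ∧
    (x * Real.log y - y + x = x * Real.log x → x = y) := by
  rcases eq_or_lt_of_le hx with h0 | hx
  · constructor
    · simp [← h0]; linarith
    · intro h; simp [← h0] at h; linarith
  · have hyx : 0 < y / x := div_pos hy hx
    have hl : Real.log (y / x) ≤ y / x - 1 := Real.log_le_sub_one_of_pos hyx
    rw [Real.log_div (ne_of_gt hy) (ne_of_gt hx)] at hl
    have hmul := mul_le_mul_of_nonneg_left hl (le_of_lt hx)
    have hfield : x * (y / x - 1) = y - x := by field_simp
    constructor
    · nlinarith [hmul, hfield]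
    · intro h
      by_contra hne
      have hne' : y / x ≠ 1 := by
        intro hh
        exact hne ((div_eq_one_iff_eq (ne_of_gt hx)).mp hh).symm
      have hl' : Real.log (y / x) < y / x - 1 := Real.log_lt_sub_one_of_pos hyx hne'
      rw [Real.log_div (ne_of_gt hy) (ne_of_gt hx)] at hl'
      have hmul' := (mul_lt_mul_iff_right₀ hx).mpr hl'
      nlinarith [hmul', hfield]

lemma jensen_key {ι : Type*} [Fintype ι] (lam mu : ι → ℝ) (q : ι → ι → ℝ)
    (hlam : ∀ j, 0 ≤ lam j) (hq : ∀ i j, 0 ≤ q i j)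
    (hrow : ∀ i, ∑ j, q i j = 1) (hcol : ∀ j, ∑ i, q i j = 1)
    (hmu : ∀ i, mu i = ∑ j, q i j * lam j) :
    (∑ i, mu i * Real.log (mu i)) ≤ (∑ j, lam j * Real.log (lam j)) ∧
    ((∑ i, mu i * Real.log (mu i)) = (∑ j, lam j * Real.log (lam j)) →
      ∀ i j, q i j ≠ 0 → lam j = mu i) := by
  classical
  have hmu0 : ∀ i, 0 ≤ mu i := fun i => by
    rw [hmu i]
    exact Finset.sum_nonneg fun j _ => mul_nonneg (hq i j) (hlam j)
  have hper : ∀ i, mu i * Real.log (mu i) ≤ ∑ j, q i j * (lam j * Real.log (lam j)) ∧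
      (mu i * Real.log (mu i) = ∑ j, q i j * (lam j * Real.log (lam j)) →
        ∀ j, q i j ≠ 0 → lam j = mu i) := by
    intro i
    rcases eq_or_lt_of_le (hmu0 i) with h0 | hpos
    · have hz : ∀ j, q i j * lam j = 0 := by
        have hs : ∑ j, q i j * lam j = 0 := by rw [← hmu i, ← h0]
        intro j
        exact (Finset.sum_eq_zero_iff_of_nonneg
          (fun j _ => mul_nonneg (hq i j) (hlam j))).1 hs j (Finset.mem_univ j)
      have hterm : ∀ j, q i j * (lam j * Real.log (lam j)) = 0 := by
        intro j
        rcases mul_eq_zero.1 (hz j) with h | h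
        · simp [h]
        · simp [h]
      constructor
      · rw [Finset.sum_eq_zero fun j _ => hterm j, ← h0]; simp
      · intro _ j hj
        rcases mul_eq_zero.1 (hz j) with h | h
        · exact absurd h hj
        · rw [h, ← h0]
    · have hle : ∀ j, q i j * (lam j * Real.log (mu i) - mu i + lam j)
          ≤ q i j * (lam j * Real.log (lam j)) := fun j =>
        mul_le_mul_of_nonneg_left (pt_tangent (lam j) (mu i) (hlam j) hpos).1 (hq i j)
      have hsum : ∑ j, q i j * (lam j * Real.log (mu i) - mu i + lam j)
          = mu i * Real.log (mu i) := by
        have hrw : ∀ j, q i j * (lam j * Real.log (mu i) - mu i + lam j)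
            = (q i j * lam j) * Real.log (mu i) - q i j * mu i + q i j * lam j := by
          intro j; ring
        rw [Finset.sum_congr rfl fun j _ => hrw j]
        rw [Finset.sum_add_distrib, Finset.sum_sub_distrib, ← Finset.sum_mul, ← Finset.sum_mul,
          ← hmu i, hrow i]
        ring
      constructor
      · calc mu i * Real.log (mu i)
            = ∑ j, q i j * (lam j * Real.log (mu i) - mu i + lam j) := hsum.symm
          _ ≤ ∑ j, q i j * (lam j * Real.log (lam j)) := Finset.sum_le_sum fun j _ => hle j
      · intro heq j hj
        have hall := (Finset.sum_eq_sum_iff_of_le fun j _ => hle j).1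
          (by rw [hsum, heq]) j (Finset.mem_univ j)
        have := mul_left_cancel₀ hj hall.symm
        exact (pt_tangent (lam j) (mu i) (hlam j) hpos).2 this.symm
  have hswap : ∑ i, ∑ j, q i j * (lam j * Real.log (lam j)) = ∑ j, lam j * Real.log (lam j) := by
    rw [Finset.sum_comm]
    refine Finset.sum_congr rfl fun j _ => ?_
    rw [← Finset.sum_mul, hcol j, one_mul]
  constructor
  · calc ∑ i, mu i * Real.log (mu i)
        ≤ ∑ i, ∑ j, q i j * (lam j * Real.log (lam j)) :=
          Finset.sum_le_sum fun i _ => (hper i).1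
      _ = ∑ j, lam j * Real.log (lam j) := hswap
  · intro heq i j hij
    have hall := (Finset.sum_eq_sum_iff_of_le fun i _ => (hper i).1).1
      (by rw [heq, ← hswap]) i (Finset.mem_univ i)
    exact (hper i).2 hall j hij

section helpers

variable {A B : Type*} [Fintype A] [DecidableEq A] [Fintype B] [DecidableEq B]

lemma kron_std_mul_apply (c : A) (M : Matrix (A × B) (A × B) ℂ) (a a' : A) (b b' : B) :
    ((Matrix.single c c (1 : ℂ) ⊗ₖ (1 : Matrix B B ℂ)) * M) (a, b) (a', b')
      = if a = c then M (c, b) (a', b') else 0 := by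
  rw [Matrix.mul_apply, Fintype.sum_prod_type]
  simp only [Matrix.kroneckerMap_apply, Matrix.single, Matrix.one_apply,
    Matrix.of_apply, ite_mul, one_mul, zero_mul, mul_ite, mul_one, mul_zero]
  simp [Finset.sum_ite_eq, eq_comm, and_comm]
  aesop

lemma mul_kron_std_apply (c : A) (M : Matrix (A × B) (A × B) ℂ) (a a' : A) (b b' : B) :
    (M * (Matrix.single c c (1 : ℂ) ⊗ₖ (1 : Matrix B B ℂ))) (a, b) (a', b')
      = if a' = c then M (a, b) (c, b') else 0 := by
  rw [Matrix.mul_apply, Fintype.sum_prod_type]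
  simp only [Matrix.kroneckerMap_apply, Matrix.single, Matrix.one_apply,
    Matrix.of_apply, ite_mul, one_mul, zero_mul, mul_ite, mul_one, mul_zero]
  simp [Finset.sum_ite_eq, eq_comm, and_comm]
  aesop

lemma dephA_apply_s9 (ρ : Matrix (A × B) (A × B) ℂ) (a a' : A) (b b' : B) :
    dephA ρ (a, b) (a', b') = if a = a' then ρ (a, b) (a', b') else 0 := by
  simp only [dephA, Matrix.sum_apply, Matrix.mul_assoc]
  have h1 : ∀ c : A, ((Matrix.single c c (1 : ℂ) ⊗ₖ (1 : Matrix B B ℂ)) *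
      (ρ * (Matrix.single c c (1 : ℂ) ⊗ₖ (1 : Matrix B B ℂ)))) (a, b) (a', b')
      = if a = c then (if a' = c then ρ (c, b) (c, b') else 0) else 0 := by
    intro c
    rw [kron_std_mul_apply, mul_kron_std_apply]
  rw [Finset.sum_congr rfl fun c _ => h1 c, Finset.sum_ite_eq]
  simp only [Finset.mem_univ, if_true]
  by_cases h : a = a'
  · subst h; simp
  · simp [h, Ne.symm h]

lemma kron_std_sq (c : A) :
    (Matrix.single c c (1 : ℂ) ⊗ₖ (1 : Matrix B B ℂ)) *
      (Matrix.single c c (1 : ℂ) ⊗ₖ (1 : Matrix B B ℂ))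
    = Matrix.single c c (1 : ℂ) ⊗ₖ (1 : Matrix B B ℂ) := by
  rw [← Matrix.mul_kronecker_mul, Matrix.single_mul_single_same, Matrix.one_mul, mul_one]

lemma kron_std_herm (c : A) :
    (Matrix.single c c (1 : ℂ) ⊗ₖ (1 : Matrix B B ℂ))ᴴ
    = Matrix.single c c (1 : ℂ) ⊗ₖ (1 : Matrix B B ℂ) := by
  ext ⟨a, b⟩ ⟨a', b'⟩
  simp only [Matrix.conjTranspose_apply, Matrix.kroneckerMap_apply, Matrix.single,
    Matrix.one_apply, Matrix.of_apply]
  split_ifs <;> simp_all <;> aesop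

lemma kron_std_sum :
    ∑ c : A, (Matrix.single c c (1 : ℂ) ⊗ₖ (1 : Matrix B B ℂ)) = 1 := by
  ext ⟨a, b⟩ ⟨a', b'⟩
  simp only [Matrix.sum_apply, Matrix.kroneckerMap_apply, Matrix.single,
    Matrix.one_apply, Matrix.of_apply, ite_mul, one_mul, zero_mul, mul_ite, mul_one, mul_zero]
  by_cases h : a = a' <;> by_cases hb : b = b' <;>
    simp_all [Finset.sum_ite_eq, Prod.ext_iff] <;> aesop

end helpers

lemma mul_diag_conjT_apply {n : Type*} [Fintype n] [DecidableEq n]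
    (M : Matrix n n ℂ) (d : n → ℂ) (i : n) :
    (M * Matrix.diagonal d * Mᴴ) i i = ∑ j, d j * (Complex.normSq (M i j) : ℂ) := by
  rw [Matrix.mul_apply]
  simp only [Matrix.mul_diagonal, Matrix.conjTranspose_apply, RCLike.star_def]
  refine Finset.sum_congr rfl fun j _ => ?_
  rw [mul_comm (M i j) (d j), mul_assoc, Complex.mul_conj]

lemma mul_conjT_apply {n : Type*} [Fintype n] (M : Matrix n n ℂ) (i : n) :
    (M * Mᴴ) i i = ∑ j, (Complex.normSq (M i j) : ℂ) := by
  simp only [Matrix.mul_apply, Matrix.conjTranspose_apply, RCLike.star_def]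
  refine Finset.sum_congr rfl fun j _ => ?_
  rw [Complex.mul_conj]

lemma conjT_mul_apply {n : Type*} [Fintype n] (M : Matrix n n ℂ) (j : n) :
    (Mᴴ * M) j j = ∑ i, (Complex.normSq (M i j) : ℂ) := by
  simp only [Matrix.mul_apply, Matrix.conjTranspose_apply, RCLike.star_def]
  refine Finset.sum_congr rfl fun i _ => ?_
  rw [mul_comm, Complex.mul_conj]

lemma trace_eq_sum_eigenvalues {m : Type*} [Fintype m] [DecidableEq m] {M : Matrix m m ℂ}
    (hH : M.IsHermitian) : M.trace = ∑ i, (hH.eigenvalues i : ℂ) := by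
  conv_lhs => rw [hH.spectral_theorem]
  rw [Unitary.conjStarAlgAut_apply, Matrix.trace_mul_cycle, Unitary.coe_star_mul_self hH.eigenvectorUnitary,
    Matrix.one_mul, Matrix.trace_diagonal]
  simp

lemma psd_trace_zero {m : Type*} [Fintype m] [DecidableEq m] {M : Matrix m m ℂ}
    (hM : M.PosSemidef) (h : M.trace = 0) : M = 0 := by
  have hH := hM.1
  rw [trace_eq_sum_eigenvalues hH, ← Complex.ofReal_sum] at h
  have hsum : ∑ i, hH.eigenvalues i = 0 := by exact_mod_cast h
  have hev : ∀ i, hH.eigenvalues i = 0 := fun i =>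
    (Finset.sum_eq_zero_iff_of_nonneg fun j _ => hM.eigenvalues_nonneg j).1 hsum i
      (Finset.mem_univ i)
  have hspec := hH.spectral_theorem
  rw [hspec]
  have hd : Matrix.diagonal (RCLike.ofReal ∘ hH.eigenvalues) = (0 : Matrix m m ℂ) := by
    ext i j
    simp [Matrix.diagonal_apply, hev]
  rw [hd, map_zero]

/-! ### The main theorem -/

set_option maxHeartbeats 2000000 in
/-- **Faithfulness of `Δ_Z`.** For every density matrix `ρ` on
`ℂ^{d_A} ⊗ ℂ^{d_B}`, `Δ_Z(ρ) ≥ 0`, and `Δ_Z(ρ) = 0` iff `ρ ∈ CQ_Z`, equivalently iff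
`ρ = Δ(ρ)`. -/
theorem DeltaZ_faithful (dA dB : ℕ)
    (ρ : Matrix (Fin dA × Fin dB) (Fin dA × Fin dB) ℂ) (hρ : IsDensity ρ) :
    0 ≤ DeltaZ ρ ∧ (DeltaZ ρ = 0 ↔ IsCQ ρ) ∧ (DeltaZ ρ = 0 ↔ ρ = dephA ρ) := by
  classical
  obtain ⟨hpsd, htr⟩ := hρ
  have hH : ρ.IsHermitian := hpsd.1
  set P : Fin dA → Matrix (Fin dA × Fin dB) (Fin dA × Fin dB) ℂ :=
    fun c => Matrix.single c c (1 : ℂ) ⊗ₖ (1 : Matrix (Fin dB) (Fin dB) ℂ) with hPdef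
  have hPH : ∀ c, (P c)ᴴ = P c := fun c => by rw [hPdef]; exact kron_std_herm c
  have hPP : ∀ c, P c * P c = P c := fun c => by rw [hPdef]; exact kron_std_sq c
  have hPsum : ∑ c, P c = 1 := by rw [hPdef]; exact kron_std_sum
  have hdephsum : dephA ρ = ∑ c, P c * ρ * P c := by rw [hPdef]; rfl
  have hDherm : (dephA ρ).IsHermitian := by
    rw [Matrix.IsHermitian]
    ext ⟨a, b⟩ ⟨a', b'⟩
    rw [Matrix.conjTranspose_apply, dephA_apply_s9, dephA_apply_s9]
    by_cases h : a = a'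
    · subst h
      simp only [if_pos rfl]
      exact hH.apply (a, b) (a, b')
    · simp [h, Ne.symm h]
  set U : Matrix (Fin dA × Fin dB) (Fin dA × Fin dB) ℂ := ↑hH.eigenvectorUnitary with hUdef
  set W : Matrix (Fin dA × Fin dB) (Fin dA × Fin dB) ℂ := ↑hDherm.eigenvectorUnitary with hWdef
  set lam : Fin dA × Fin dB → ℝ := hH.eigenvalues with hlamdef
  set mu : Fin dA × Fin dB → ℝ := hDherm.eigenvalues with hmudef
  have hUU : U * Uᴴ = 1 := by
    rw [hUdef, ← Matrix.star_eq_conjTranspose]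
    exact Unitary.coe_mul_star_self _
  have hU'U : Uᴴ * U = 1 := by
    rw [hUdef, ← Matrix.star_eq_conjTranspose]
    exact Unitary.coe_star_mul_self _
  have hWW : W * Wᴴ = 1 := by
    rw [hWdef, ← Matrix.star_eq_conjTranspose]
    exact Unitary.coe_mul_star_self _
  have hW'W : Wᴴ * W = 1 := by
    rw [hWdef, ← Matrix.star_eq_conjTranspose]
    exact Unitary.coe_star_mul_self _
  have hρspec : ρ = U * Matrix.diagonal (RCLike.ofReal ∘ lam) * Uᴴ := by
    have := hH.spectral_theorem
    rwa [Unitary.conjStarAlgAut_apply, Matrix.star_eq_conjTranspose] at this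
  have hWdiag : Wᴴ * dephA ρ * W = Matrix.diagonal (RCLike.ofReal ∘ mu) := by
    have := hDherm.spectral_theorem
    rw [Unitary.conjStarAlgAut_apply, Matrix.star_eq_conjTranspose] at this
    have h' : dephA ρ = W * Matrix.diagonal (RCLike.ofReal ∘ mu) * Wᴴ := this
    rw [h']
    simp only [Matrix.mul_assoc]
    rw [← Matrix.mul_assoc Wᴴ W, hW'W, Matrix.one_mul, Matrix.mul_one]
  have hDspec : dephA ρ = W * Matrix.diagonal (RCLike.ofReal ∘ mu) * Wᴴ := by
    have := hDherm.spectral_theorem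
    rwa [Unitary.conjStarAlgAut_apply, Matrix.star_eq_conjTranspose] at this
  set Amat : Fin dA → Matrix (Fin dA × Fin dB) (Fin dA × Fin dB) ℂ :=
    fun c => Wᴴ * P c * U with hAdef
  have hAcT : ∀ c, (Amat c)ᴴ = Uᴴ * (P c * W) := by
    intro c
    rw [hAdef]
    simp only [Matrix.conjTranspose_mul, Matrix.conjTranspose_conjTranspose, hPH c,
      Matrix.mul_assoc]
  set q : (Fin dA × Fin dB) → (Fin dA × Fin dB) → ℝ :=
    fun i j => ∑ c, Complex.normSq (Amat c i j) with hqdef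
  have hqnn : ∀ i j, 0 ≤ q i j := fun i j =>
    Finset.sum_nonneg fun c _ => Complex.normSq_nonneg _
  have hcancU : ∀ X : Matrix (Fin dA × Fin dB) (Fin dA × Fin dB) ℂ, U * (Uᴴ * X) = X :=
    fun X => by rw [← Matrix.mul_assoc, hUU, Matrix.one_mul]
  have hcancW : ∀ X : Matrix (Fin dA × Fin dB) (Fin dA × Fin dB) ℂ, W * (Wᴴ * X) = X :=
    fun X => by rw [← Matrix.mul_assoc, hWW, Matrix.one_mul]
  have hAAT : ∀ c, Amat c * (Amat c)ᴴ = Wᴴ * (P c * W) := by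
    intro c
    rw [hAcT c, hAdef]
    simp only [Matrix.mul_assoc]
    rw [hcancU (P c * W), ← Matrix.mul_assoc (P c), hPP c]
  have hATA : ∀ c, (Amat c)ᴴ * Amat c = Uᴴ * (P c * U) := by
    intro c
    rw [hAcT c, hAdef]
    simp only [Matrix.mul_assoc]
    rw [hcancW (P c * U), ← Matrix.mul_assoc (P c), hPP c]
  have hrow : ∀ i, ∑ j, q i j = 1 := by
    intro i
    have h2 : ∑ c, Amat c * (Amat c)ᴴ = 1 := by
      rw [Finset.sum_congr rfl fun c _ => hAAT c, ← Finset.mul_sum, ← Finset.sum_mul,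
        hPsum, Matrix.one_mul, hW'W]
    have h1 : ((∑ j, q i j : ℝ) : ℂ) = 1 := by
      calc ((∑ j, q i j : ℝ) : ℂ)
          = ∑ j, ∑ c, (Complex.normSq (Amat c i j) : ℂ) := by
            rw [hqdef]; push_cast; rfl
        _ = ∑ c, ∑ j, (Complex.normSq (Amat c i j) : ℂ) := Finset.sum_comm
        _ = ∑ c, (Amat c * (Amat c)ᴴ) i i :=
            Finset.sum_congr rfl fun c _ => (mul_conjT_apply _ i).symm
        _ = (∑ c, Amat c * (Amat c)ᴴ) i i := (Matrix.sum_apply i i _ _).symm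
        _ = (1 : Matrix (Fin dA × Fin dB) (Fin dA × Fin dB) ℂ) i i := by rw [h2]
        _ = 1 := Matrix.one_apply_eq i
    exact_mod_cast h1
  have hcol : ∀ j, ∑ i, q i j = 1 := by
    intro j
    have h2 : ∑ c, (Amat c)ᴴ * Amat c = 1 := by
      rw [Finset.sum_congr rfl fun c _ => hATA c, ← Finset.mul_sum, ← Finset.sum_mul,
        hPsum, Matrix.one_mul, hU'U]
    have h1 : ((∑ i, q i j : ℝ) : ℂ) = 1 := by
      calc ((∑ i, q i j : ℝ) : ℂ)
          = ∑ i, ∑ c, (Complex.normSq (Amat c i j) : ℂ) := by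
            rw [hqdef]; push_cast; rfl
        _ = ∑ c, ∑ i, (Complex.normSq (Amat c i j) : ℂ) := Finset.sum_comm
        _ = ∑ c, ((Amat c)ᴴ * Amat c) j j :=
            Finset.sum_congr rfl fun c _ => (conjT_mul_apply _ j).symm
        _ = (∑ c, (Amat c)ᴴ * Amat c) j j := (Matrix.sum_apply j j _ _).symm
        _ = (1 : Matrix (Fin dA × Fin dB) (Fin dA × Fin dB) ℂ) j j := by rw [h2]
        _ = 1 := Matrix.one_apply_eq j
    exact_mod_cast h1
  have hmuq : ∀ i, mu i = ∑ j, q i j * lam j := by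
    intro i
    have h1 : Wᴴ * dephA ρ * W
        = ∑ c, Amat c * Matrix.diagonal (RCLike.ofReal ∘ lam) * (Amat c)ᴴ := by
      rw [hdephsum, Finset.mul_sum, Finset.sum_mul]
      refine Finset.sum_congr rfl fun c _ => ?_
      rw [hρspec, hAcT c, hAdef]
      simp only [Matrix.mul_assoc]
    have h2 : ((mu i : ℝ) : ℂ)
        = ∑ c, ((Amat c * Matrix.diagonal (RCLike.ofReal ∘ lam) * (Amat c)ᴴ :
            Matrix (Fin dA × Fin dB) (Fin dA × Fin dB) ℂ)) i i := by
      rw [show ((mu i : ℝ) : ℂ) = Matrix.diagonal (RCLike.ofReal ∘ mu) i i by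
        rw [Matrix.diagonal_apply_eq]; rfl]
      rw [← hWdiag, h1, Matrix.sum_apply]
    have h3 : ((mu i : ℝ) : ℂ) = ((∑ j, q i j * lam j : ℝ) : ℂ) := by
      rw [h2, Finset.sum_congr rfl fun c (_ : c ∈ Finset.univ) =>
        mul_diag_conjT_apply (Amat c) (RCLike.ofReal ∘ lam) i]
      rw [Finset.sum_comm]
      push_cast
      refine Finset.sum_congr rfl fun j _ => ?_
      have hco : ∀ j', (RCLike.ofReal ∘ lam) j' = ((lam j' : ℝ) : ℂ) := fun _ => rfl
      simp only [hco]
      rw [← Finset.mul_sum, hqdef]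
      push_cast
      ring
    exact_mod_cast h3
  have hlam0 : ∀ j, 0 ≤ lam j := fun j => hpsd.eigenvalues_nonneg j
  obtain ⟨hkey, hkeyeq⟩ := jensen_key lam mu q hlam0 hqnn hrow hcol hmuq
  have hvρ : vnEntropy ρ = -∑ j, lam j * Real.logb 2 (lam j) := by
    rw [vnEntropy, dif_pos hH]
  have hvD : vnEntropy (dephA ρ) = -∑ i, mu i * Real.logb 2 (mu i) := by
    rw [vnEntropy, dif_pos hDherm]
  have hlog2 : (0 : ℝ) < Real.log 2 := Real.log_pos one_lt_two
  have hDZ : DeltaZ ρ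
      = ((∑ j, lam j * Real.log (lam j)) - ∑ i, mu i * Real.log (mu i)) / Real.log 2 := by
    have hsplit : ∀ f : Fin dA × Fin dB → ℝ,
        ∑ x, f x * Real.logb 2 (f x) = (∑ x, f x * Real.log (f x)) / Real.log 2 := by
      intro f
      rw [Finset.sum_div]
      exact Finset.sum_congr rfl fun x _ => by rw [Real.logb, mul_div_assoc]
    rw [DeltaZ, hvρ, hvD, hsplit mu, hsplit lam]
    ring
  have hge : 0 ≤ DeltaZ ρ := by
    rw [hDZ]
    exact div_nonneg (by linarith) (le_of_lt hlog2)
  have hzero_iff : DeltaZ ρ = 0 ↔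
      (∑ i, mu i * Real.log (mu i)) = ∑ j, lam j * Real.log (lam j) := by
    rw [hDZ]
    constructor
    · intro h
      rcases div_eq_zero_iff.1 h with h | h
      · linarith [sub_eq_zero.1 h]
      · exact absurd h (ne_of_gt hlog2)
    · intro h
      rw [h]
      simp
  -- hard direction: equality implies fixed point
  have himp : DeltaZ ρ = 0 → ρ = dephA ρ := by
    intro h0
    have hcond := hkeyeq (hzero_iff.1 h0)
    have hA0 : ∀ c i j, Amat c i j ≠ 0 → lam j = mu i := by
      intro c i j hne
      refine hcond i j (ne_of_gt ?_)
      have h1 : 0 < Complex.normSq (Amat c i j) := Complex.normSq_pos.2 hne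
      have h2 : Complex.normSq (Amat c i j) ≤ q i j := by
        simp only [hqdef]
        exact Finset.single_le_sum (f := fun c' => Complex.normSq (Amat c' i j))
          (fun c' _ => Complex.normSq_nonneg _) (Finset.mem_univ c)
      exact lt_of_lt_of_le h1 h2
    have hcomm : ∀ c, Matrix.diagonal (RCLike.ofReal ∘ lam) * (Amat c)ᴴ
        = (Amat c)ᴴ * Matrix.diagonal (RCLike.ofReal ∘ mu) := by
      intro c
      ext j i
      rw [Matrix.diagonal_mul, Matrix.mul_diagonal, Matrix.conjTranspose_apply]
      by_cases hz : Amat c i j = 0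
      · rw [hz]
        simp
      · simp only [Function.comp_apply]
        rw [hA0 c i j hz]
        ring
    have hstep : ∀ c, ρ * (P c * W) = P c * (W * Matrix.diagonal (RCLike.ofReal ∘ mu)) := by
      intro c
      have e1 : (Amat c)ᴴ = Uᴴ * (P c * W) := hAcT c
      calc ρ * (P c * W)
          = U * (Matrix.diagonal (RCLike.ofReal ∘ lam) * (Uᴴ * (P c * W))) := by
            rw [hρspec]; simp only [Matrix.mul_assoc]
        _ = U * (Matrix.diagonal (RCLike.ofReal ∘ lam) * (Amat c)ᴴ) := by rw [e1]
        _ = U * ((Amat c)ᴴ * Matrix.diagonal (RCLike.ofReal ∘ mu)) := by rw [hcomm c]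
        _ = U * (Uᴴ * (P c * W) * Matrix.diagonal (RCLike.ofReal ∘ mu)) := by rw [e1]
        _ = P c * (W * Matrix.diagonal (RCLike.ofReal ∘ mu)) := by
            simp only [← Matrix.mul_assoc]
            rw [hUU, Matrix.one_mul]
    have hsumstep : ρ * W = W * Matrix.diagonal (RCLike.ofReal ∘ mu) := by
      have h1 : ∑ c, ρ * (P c * W)
          = ∑ c, P c * (W * Matrix.diagonal (RCLike.ofReal ∘ mu)) :=
        Finset.sum_congr rfl fun c _ => hstep c
      rw [← Finset.mul_sum, ← Finset.sum_mul, ← Finset.sum_mul, hPsum, Matrix.one_mul,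
        Matrix.one_mul] at h1
      exact h1
    calc ρ = ρ * (W * Wᴴ) := by rw [hWW, Matrix.mul_one]
      _ = (ρ * W) * Wᴴ := by rw [Matrix.mul_assoc]
      _ = W * Matrix.diagonal (RCLike.ofReal ∘ mu) * Wᴴ := by rw [hsumstep]
      _ = dephA ρ := hDspec.symm
  have himp2 : ρ = dephA ρ → DeltaZ ρ = 0 := by
    intro h
    rw [DeltaZ, ← h, sub_self]
  -- CQ directions
  have hcq1 : IsCQ ρ → ρ = dephA ρ := by
    intro hcq
    obtain ⟨p, τ, hp0, hp1, hτ, heq⟩ := hcq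
    ext ⟨a, b⟩ ⟨a', b'⟩
    rw [dephA_apply_s9]
    by_cases h : a = a'
    · simp [h]
    · rw [if_neg h, heq, Matrix.sum_apply]
      refine Finset.sum_eq_zero fun c _ => ?_
      simp only [Matrix.smul_apply, Matrix.kroneckerMap_apply, Matrix.single,
        Matrix.of_apply, smul_eq_mul]
      have : ¬(c = a ∧ c = a') := fun ⟨h1, h2⟩ => h (h1 ▸ h2)
      rw [if_neg this]
      ring
  have hcq2 : ρ = dephA ρ → IsCQ ρ := by
    intro h
    have hneB : Nonempty (Fin dB) := by
      rcases Nat.eq_zero_or_pos dB with h0 | h0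
      · exfalso
        subst h0
        rw [Matrix.trace] at htr
        simp at htr
      · exact ⟨⟨0, h0⟩⟩
    obtain ⟨b0⟩ := hneB
    set Bm : Fin dA → Matrix (Fin dB) (Fin dB) ℂ :=
      fun c => ρ.submatrix (fun b => (c, b)) (fun b => (c, b)) with hBdef
    have hBpsd : ∀ c, (Bm c).PosSemidef := fun c => hpsd.submatrix _
    set p : Fin dA → ℝ := fun c => ∑ i, (hBpsd c).1.eigenvalues i with hpdef2
    have hptr : ∀ c, (Bm c).trace = ((p c : ℝ) : ℂ) := by
      intro c
      rw [trace_eq_sum_eigenvalues (hBpsd c).1, hpdef2]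
      push_cast
      rfl
    have hp0 : ∀ c, 0 ≤ p c := fun c =>
      Finset.sum_nonneg fun i _ => (hBpsd c).eigenvalues_nonneg i
    have hpsum1 : ∑ c, p c = 1 := by
      have h1 : ∑ c, ((p c : ℝ) : ℂ) = 1 := by
        rw [Finset.sum_congr rfl fun c (_ : c ∈ Finset.univ) => (hptr c).symm, ← htr,
          Matrix.trace, Fintype.sum_prod_type]
        rfl
      exact_mod_cast h1
    have hB0 : ∀ c, p c = 0 → Bm c = 0 := fun c hc =>
      psd_trace_zero (hBpsd c) (by rw [hptr c, hc]; norm_num)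
    set τf : Fin dA → Matrix (Fin dB) (Fin dB) ℂ := fun c =>
      if p c = 0 then Matrix.single b0 b0 (1 : ℂ) else ((p c : ℂ))⁻¹ • Bm c with hτdef
    have hptau : ∀ c b b', (p c : ℂ) * τf c b b' = ρ (c, b) (c, b') := by
      intro c b b'
      by_cases hc : p c = 0
      · rw [hτdef]
        simp only [if_pos hc, hc]
        have hz : ρ (c, b) (c, b') = 0 := by
          have := congrFun (congrFun (hB0 c hc) b) b'
          simpa [hBdef] using this
        rw [hz]
        push_cast
        ring
      · rw [hτdef]
        simp only [if_neg hc, Matrix.smul_apply, smul_eq_mul]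
        have hpc : ((p c : ℝ) : ℂ) ≠ 0 := by exact_mod_cast hc
        rw [← mul_assoc, mul_inv_cancel₀ hpc, one_mul]
        rfl
    refine ⟨p, τf, hp0, hpsum1, ?_, ?_⟩
    · intro c
      by_cases hc : p c = 0
      · rw [hτdef]
        simp only [if_pos hc]
        constructor
        · have hds : Matrix.single b0 b0 (1 : ℂ)
              = Matrix.diagonal (fun b => if b = b0 then (1 : ℂ) else 0) := by
            ext x y
            rw [Matrix.diagonal_apply]
            simp only [Matrix.single, Matrix.of_apply]
            by_cases h1 : x = y
            · subst h1
              rw [if_pos rfl]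
              by_cases h2 : x = b0
              · subst h2
                simp
              · rw [if_neg h2, if_neg (fun hh : b0 = x ∧ b0 = x => h2 hh.1.symm)]
            · rw [if_neg h1, if_neg (show ¬(b0 = x ∧ b0 = y) by
                rintro ⟨rfl, hbb⟩; exact h1 hbb)]
          rw [hds]
          refine Matrix.PosSemidef.diagonal ?_
          intro i
          dsimp
          split_ifs
          · exact zero_le_one
          · exact le_refl 0
        · rw [Matrix.trace]
          simp [Matrix.diag, Matrix.single, Finset.sum_ite_eq]
      · rw [hτdef]
        simp only [if_neg hc]
        have hpc : ((p c : ℝ) : ℂ) ≠ 0 := by exact_mod_cast hc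
        have hpnn : (0 : ℂ) ≤ ((p c : ℝ) : ℂ)⁻¹ := by
          rw [show ((p c : ℝ) : ℂ)⁻¹ = (((p c)⁻¹ : ℝ) : ℂ) by push_cast; ring]
          rw [Complex.zero_le_real]
          exact inv_nonneg.2 (hp0 c)
        constructor
        · constructor
          · rw [Matrix.IsHermitian, Matrix.conjTranspose_smul, (hBpsd c).1]
            congr 1
            rw [RCLike.star_def, ← Complex.ofReal_inv, Complex.conj_ofReal,
              Complex.ofReal_inv]
          · exact ((hBpsd c).smul hpnn).2
        · rw [Matrix.trace_smul, hptr c, smul_eq_mul, inv_mul_cancel₀ hpc]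
    · ext ⟨a, b⟩ ⟨a', b'⟩
      rw [show ρ (a, b) (a', b') = dephA ρ (a, b) (a', b') by rw [← h], dephA_apply_s9,
        Matrix.sum_apply]
      by_cases haa : a = a'
      · subst haa
        rw [if_pos rfl, ← hptau a b b']
        have hsum := Finset.sum_eq_single_of_mem
          (f := fun c => ((p c : ℂ) • (Matrix.single c c (1 : ℂ) ⊗ₖ τf c)) (a, b) (a, b'))
          a (Finset.mem_univ a)
          (fun c _ hca => by
            simp only [Matrix.smul_apply, Matrix.kroneckerMap_apply, smul_eq_mul]
            rw [Matrix.single_apply_of_ne c c (1 : ℂ) a a (fun hh => hca hh.1)]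
            ring)
        rw [hsum]
        simp only [Matrix.smul_apply, Matrix.kroneckerMap_apply, smul_eq_mul,
          Matrix.single_apply_same, one_mul]
      · rw [if_neg haa]
        symm
        refine Finset.sum_eq_zero fun c _ => ?_
        simp only [Matrix.smul_apply, Matrix.kroneckerMap_apply, smul_eq_mul]
        rw [Matrix.single_apply_of_ne c c (1 : ℂ) a a'
          (by rintro ⟨rfl, h2⟩; exact haa h2)]
        ring
  exact ⟨hge, ⟨fun h => hcq2 (himp h), fun h => himp2 (hcq1 h)⟩, ⟨himp, himp2⟩⟩
end
end

section
/- (Quantum-classical states) Let ρ = ∑_{k=0}^{d_B−1} p_k ρ_k ⊗ |k⟩⟨k| be a density matrix on ℂ^{d_A} ⊗ ℂ^{d_B}, where p_k ≥ 0, ∑_k p_k = 1, each ρ_k is a density matrix on ℂ^{d_A}, and {|k⟩} is the computational basis of ℂ^{d_B}. Then Δ_Z(ρ) = ∑_k p_k C(ρ_k), where C is the relative entropy of coherence on ℂ^{d_A}. -/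
open scoped Classical ComplexOrder
open Matrix Kronecker BigOperators

noncomputable section

/-- The relative entropy of coherence with respect to the computational basis:
`C(τ) = S(diag(τ)) − S(τ)`, where `diag(τ)` is `τ` with the off-diagonal entries set to zero. -/
noncomputable def relCoh {n : Type*} [Fintype n] [DecidableEq n]
    (τ : Matrix n n ℂ) : ℝ :=
  vnEntropy (Matrix.diagonal fun i => τ i i) - vnEntropy τ

/-! ### Auxiliary lemmas -/

section Aux

open Polynomial

variable {n : Type*} [Fintype n] [DecidableEq n]

lemma aux_charpoly_conj_eq (V D : Matrix n n ℂ) (hV : V * Vᴴ = 1) :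
    (V * D * Vᴴ).charpoly = D.charpoly := by
  have hmap : V.map (C : ℂ →+* ℂ[X]) * Vᴴ.map C = 1 := by
    rw [← Matrix.map_mul, hV]; simp
  have hchar : charmatrix (V * D * Vᴴ) = V.map C * charmatrix D * (Vᴴ.map C) := by
    unfold charmatrix
    rw [Matrix.mul_sub, Matrix.sub_mul]
    congr 1
    · rw [mul_assoc, scalar_commute (X : ℂ[X]) (fun r => Commute.all _ _) _, ← mul_assoc, hmap,
        one_mul]
    · simp [RingHom.mapMatrix_apply, Matrix.map_mul]
  have hdet : det (V.map (C : ℂ →+* ℂ[X])) * det (Vᴴ.map C) = 1 := by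
    rw [← det_mul, hmap, det_one]
  rw [Matrix.charpoly, hchar, det_mul, det_mul, Matrix.charpoly]
  ring_nf
  rw [mul_comm, ← mul_assoc, mul_comm (det (Vᴴ.map C)), hdet, one_mul]

lemma aux_charpoly_diagonal (v : n → ℂ) :
    (Matrix.diagonal v).charpoly = ∏ i, (X - C (v i)) := by
  have : charmatrix (Matrix.diagonal v) = Matrix.diagonal (fun i => X - C (v i)) := by
    ext i j
    by_cases h : i = j <;> simp [h, charmatrix_apply, diagonal_apply]
  rw [Matrix.charpoly, this, det_diagonal]

lemma aux_prod_eq_multiset (v : n → ℂ) :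
    ∏ i, (X - C (v i)) = ((Finset.univ.val.map v).map (fun a => X - C a)).prod := by
  rw [Finset.prod, Multiset.map_map]; rfl

lemma aux_multiset_eq_of_decomp (M V : Matrix n n ℂ) (hV : V * Vᴴ = 1) (d : n → ℝ)
    (hdec : M = V * Matrix.diagonal (fun i => (d i : ℂ)) * Vᴴ) (hM : M.IsHermitian) :
    Finset.univ.val.map (fun i => ((d i : ℂ))) =
      Finset.univ.val.map (fun i => ((hM.eigenvalues i : ℂ))) := by
  have h1 : M.charpoly = ∏ i, (X - C ((d i : ℂ))) := by
    rw [hdec, aux_charpoly_conj_eq _ _ hV, aux_charpoly_diagonal]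
  have hU : (hM.eigenvectorUnitary : Matrix n n ℂ) *
      (hM.eigenvectorUnitary : Matrix n n ℂ)ᴴ = 1 :=
    Matrix.mem_unitaryGroup_iff.mp hM.eigenvectorUnitary.2
  have h2 : M.charpoly = ∏ i, (X - C ((hM.eigenvalues i : ℂ))) := by
    conv_lhs => rw [hM.spectral_theorem]; simp only [Unitary.conjStarAlgAut_apply, Unitary.coe_star, Matrix.star_eq_conjTranspose]
    rw [aux_charpoly_conj_eq _ _ hU, aux_charpoly_diagonal]; rfl
  have h3 := h1.symm.trans h2
  rw [aux_prod_eq_multiset, aux_prod_eq_multiset] at h3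
  have := congrArg Polynomial.roots h3
  rwa [roots_multiset_prod_X_sub_C, roots_multiset_prod_X_sub_C] at this

lemma aux_sum_f_of_decomp (M V : Matrix n n ℂ) (hV : V * Vᴴ = 1) (d : n → ℝ)
    (hdec : M = V * Matrix.diagonal (fun i => (d i : ℂ)) * Vᴴ) (hM : M.IsHermitian)
    (f : ℝ → ℝ) : ∑ i, f (d i) = ∑ i, f (hM.eigenvalues i) := by
  have h := congrArg (fun s => (Multiset.map (fun z : ℂ => f z.re) s).sum)
    (aux_multiset_eq_of_decomp M V hV d hdec hM)
  simp only [Multiset.map_map] at h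
  rw [Finset.sum_eq_multiset_sum, Finset.sum_eq_multiset_sum]
  simpa [Function.comp] using h

lemma aux_isHermitian_of_decomp (M V : Matrix n n ℂ) (d : n → ℝ)
    (hdec : M = V * Matrix.diagonal (fun i => (d i : ℂ)) * Vᴴ) : M.IsHermitian := by
  rw [hdec]
  unfold Matrix.IsHermitian
  rw [conjTranspose_mul, conjTranspose_mul, conjTranspose_conjTranspose,
    diagonal_conjTranspose, mul_assoc]
  congr 2
  ext i
  simp [Pi.star_def, Complex.conj_ofReal]

lemma aux_vnEntropy_of_decomp (M V : Matrix n n ℂ) (hV : V * Vᴴ = 1) (d : n → ℝ)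
    (hdec : M = V * Matrix.diagonal (fun i => (d i : ℂ)) * Vᴴ) :
    vnEntropy M = -∑ i, d i * Real.logb 2 (d i) := by
  have hM := aux_isHermitian_of_decomp M V d hdec
  rw [vnEntropy, dif_pos hM,
    ← aux_sum_f_of_decomp M V hV d hdec hM (fun x => x * Real.logb 2 x)]

lemma aux_vnEntropy_diagonal (d : n → ℝ) :
    vnEntropy (Matrix.diagonal (fun i => (d i : ℂ))) = -∑ i, d i * Real.logb 2 (d i) := by
  apply aux_vnEntropy_of_decomp _ 1 (by simp) d
  simp

lemma aux_conj_diag_apply (U : Matrix n n ℂ) (f : n → ℂ) (i j : n) :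
    (U * Matrix.diagonal f * Uᴴ) i j = ∑ k, U i k * f k * star (U j k) := by
  rw [Matrix.mul_apply]
  refine Finset.sum_congr rfl fun k _ => ?_
  rw [Matrix.mul_diagonal, Matrix.conjTranspose_apply]

lemma aux_dephA_apply {A B : Type*} [Fintype A] [DecidableEq A] [Fintype B] [DecidableEq B]
    (ρ : Matrix (A × B) (A × B) ℂ) (a a' : A) (b b' : B) :
    dephA ρ (a, b) (a', b') = if a = a' then ρ (a, b) (a, b') else 0 := by
  simp only [dephA, Matrix.sum_apply, Matrix.mul_apply, Fintype.sum_prod_type,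
    Matrix.kroneckerMap_apply, Matrix.one_apply, Matrix.single, Matrix.of_apply,
    ite_mul, mul_ite, one_mul, mul_one, zero_mul, mul_zero, ite_and]
  simp only [Finset.sum_ite_eq, Finset.sum_ite_eq', Finset.mem_univ, if_true,
    Finset.sum_ite_irrel, Finset.sum_const_zero]
  by_cases h : a = a' <;> simp [h, eq_comm]

lemma aux_g_mul (q x : ℝ) (hq : 0 ≤ q) (hx : 0 ≤ x) :
    (q * x) * Real.logb 2 (q * x) =
      x * (q * Real.logb 2 q) + q * (x * Real.logb 2 x) := by
  by_cases hq0 : q = 0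
  · simp [hq0]
  by_cases hx0 : x = 0
  · simp [hx0]
  rw [Real.logb_mul hq0 hx0]
  ring

end Aux

/-- **Quantum-classical states.** For a quantum-classical state
`ρ = ∑ₖ pₖ ρₖ ⊗ |k⟩⟨k|` (with `pₖ ≥ 0`, `∑ₖ pₖ = 1` and each `ρₖ` a density matrix on
`ℂ^{d_A}`), one has `Δ_Z(ρ) = ∑ₖ pₖ C(ρₖ)`, where `C` is the relative entropy of
coherence on `ℂ^{d_A}`. -/
theorem DeltaZ_quantumClassical (dA dB : ℕ)
    (p : Fin dB → ℝ) (hp : ∀ k, 0 ≤ p k) (hp1 : ∑ k, p k = 1)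
    (ρs : Fin dB → Matrix (Fin dA) (Fin dA) ℂ) (hρs : ∀ k, IsDensity (ρs k)) :
    DeltaZ (∑ k, (p k : ℂ) • (ρs k ⊗ₖ Matrix.single k k (1 : ℂ))) =
      ∑ k, p k * relCoh (ρs k) := by
  have hherm : ∀ k, (ρs k).IsHermitian := fun k => (hρs k).1.1
  set ρ : Matrix (Fin dA × Fin dB) (Fin dA × Fin dB) ℂ :=
    ∑ k, (p k : ℂ) • (ρs k ⊗ₖ Matrix.single k k (1 : ℂ)) with hρ
  -- entries of ρ
  have hρ_ent : ∀ a b a' b', ρ (a, b) (a', b') =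
      if b = b' then (p b : ℂ) * ρs b a a' else 0 := by
    intro a b a' b'
    rw [hρ]
    simp only [Matrix.sum_apply, Matrix.smul_apply, Matrix.kroneckerMap_apply,
      Matrix.single, Matrix.of_apply, smul_eq_mul]
    by_cases h : b = b'
    · subst h
      rw [Finset.sum_eq_single b]
      · simp
      · intro k _ hk; simp [hk]
      · simp
    · rw [Finset.sum_eq_zero]
      · simp [h]
      · intro k _
        by_cases hk : k = b <;> simp [hk, h]
  -- the block unitary built from the eigenvector unitaries of the ρs k
  set U : Fin dB → Matrix (Fin dA) (Fin dA) ℂ :=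
    fun k => ((hherm k).eigenvectorUnitary : Matrix (Fin dA) (Fin dA) ℂ) with hU_def
  have hUU : ∀ k, U k * (U k)ᴴ = 1 := fun k =>
    Matrix.mem_unitaryGroup_iff.mp ((hherm k).eigenvectorUnitary).2
  set V : Matrix (Fin dA × Fin dB) (Fin dA × Fin dB) ℂ :=
    Matrix.of (fun ab ab' => if ab.2 = ab'.2 then U ab.2 ab.1 ab'.1 else 0) with hV_def
  set eig : Fin dB → Fin dA → ℝ := fun k => (hherm k).eigenvalues with heig_def
  set dfun : Fin dA × Fin dB → ℝ := fun ab => p ab.2 * eig ab.2 ab.1 with hd_def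
  set r : Fin dB → Fin dA → ℝ := fun k a => (ρs k a a).re with hr_def
  set rfun : Fin dA × Fin dB → ℝ := fun ab => p ab.2 * r ab.2 ab.1 with hrf_def
  have hVV : V * Vᴴ = 1 := by
    ext ⟨a, b⟩ ⟨a', b'⟩
    rw [Matrix.mul_apply, Fintype.sum_prod_type]
    simp only [hV_def, Matrix.conjTranspose_apply, Matrix.of_apply]
    by_cases h : b = b'
    · subst h
      have key : ∀ a'' : Fin dA, (∑ b'' : Fin dB,
          (if b = b'' then U b a a'' else 0) * star (if b = b'' then U b a' a'' else 0))
          = U b a a'' * star (U b a' a'') := by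
        intro a''
        rw [Finset.sum_eq_single b]
        · simp
        · intro k _ hk
          rw [if_neg (Ne.symm hk), zero_mul]
        · intro h; exact absurd (Finset.mem_univ b) h
      rw [Finset.sum_congr rfl (fun a'' _ => key a'')]
      have := congrFun (congrFun (hUU b) a) a'
      rw [Matrix.mul_apply] at this
      simp only [Matrix.conjTranspose_apply] at this
      rw [this]
      by_cases ha : a = a' <;> simp [Matrix.one_apply, ha, Prod.ext_iff]
    · rw [Finset.sum_eq_zero, Matrix.one_apply_ne (by simp [Prod.ext_iff, h])]
      intro a'' _
      rw [Finset.sum_eq_zero]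
      intro b'' _
      by_cases h1 : b = b''
      · have h2 : ¬(b' = b'') := fun hh => h (h1.trans hh.symm)
        rw [if_neg h2, star_zero, mul_zero]
      · rw [if_neg h1, zero_mul]
  -- diagonalization of ρ
  have hdec : ρ = V * Matrix.diagonal (fun i => (dfun i : ℂ)) * Vᴴ := by
    ext ⟨a, b⟩ ⟨a', b'⟩
    rw [aux_conj_diag_apply, hρ_ent a b a' b', Fintype.sum_prod_type]
    simp only [hV_def, Matrix.of_apply]
    by_cases h : b = b'
    · subst h
      have step : ∀ a'' : Fin dA, (∑ b'' : Fin dB,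
          (if b = b'' then U b a a'' else 0) * ((dfun (a'', b'') : ℂ))
            * star (if b = b'' then U b a' a'' else 0))
          = (p b : ℂ) * (U b a a'' * ((hherm b).eigenvalues a'' : ℂ) * star (U b a' a'')) := by
        intro a''
        rw [Finset.sum_eq_single b]
        · simp only [if_pos rfl, hd_def]
          push_cast
          ring
        · intro k _ hk; simp [Ne.symm hk]
        · simp
      rw [Finset.sum_congr rfl (fun a'' _ => step a''), ← Finset.mul_sum, if_pos rfl]
      congr 1
      have := congrFun (congrFun (hherm b).spectral_theorem a) a'
      simp only [Unitary.conjStarAlgAut_apply, Unitary.coe_star, Matrix.star_eq_conjTranspose] at this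
      rw [aux_conj_diag_apply] at this
      rw [this]
      rfl
    · rw [if_neg h, Finset.sum_eq_zero]
      intro a'' _
      rw [Finset.sum_eq_zero]
      intro b'' _
      by_cases h1 : b = b''
      · have h2 : ¬(b' = b'') := fun hh => h (h1.trans hh.symm)
        rw [if_neg h2, star_zero, mul_zero]
      · rw [if_neg h1, zero_mul, zero_mul]
  -- the dephased matrix is diagonal
  have hdeph : dephA ρ = Matrix.diagonal (fun ab => ((rfun ab : ℝ) : ℂ)) := by
    ext ⟨a, b⟩ ⟨a', b'⟩
    rw [aux_dephA_apply, Matrix.diagonal_apply]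
    by_cases h : a = a'
    · subst h
      rw [if_pos rfl, hρ_ent]
      by_cases hb : b = b'
      · subst hb
        rw [if_pos rfl, if_pos rfl]
        have : ((ρs b a a).re : ℂ) = ρs b a a := by
          have := (hherm b).coe_re_apply_self a
          simpa using this
        rw [hrf_def]
        push_cast
        rw [this]
      · rw [if_neg hb, if_neg (by simp [Prod.ext_iff, hb])]
    · rw [if_neg h, if_neg (by simp [Prod.ext_iff, h])]
  -- entropies
  have hSdeph : vnEntropy (dephA ρ) = -∑ ab, rfun ab * Real.logb 2 (rfun ab) := by
    rw [hdeph, aux_vnEntropy_diagonal]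
  have hSρ : vnEntropy ρ = -∑ ab, dfun ab * Real.logb 2 (dfun ab) :=
    aux_vnEntropy_of_decomp ρ V hVV dfun hdec
  have hSk : ∀ k, vnEntropy (ρs k) = -∑ a, eig k a * Real.logb 2 (eig k a) := by
    intro k
    refine aux_vnEntropy_of_decomp (ρs k) (U k) (hUU k) (eig k) ?_
    have := (hherm k).spectral_theorem
    simp only [Unitary.conjStarAlgAut_apply, Unitary.coe_star, Matrix.star_eq_conjTranspose] at this
    exact this
  have hSdiag : ∀ k, vnEntropy (Matrix.diagonal fun i => ρs k i i)
      = -∑ a, r k a * Real.logb 2 (r k a) := by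
    intro k
    have hre : (fun i => ρs k i i) = fun i => ((r k i : ℝ) : ℂ) := by
      funext i
      have := (hherm k).coe_re_apply_self i
      simpa [hr_def] using this.symm
    rw [hre, aux_vnEntropy_diagonal]
  -- trace facts
  have hrsum : ∀ k, ∑ a, r k a = 1 := by
    intro k
    have h := congrArg Complex.re (hρs k).2
    rw [Matrix.trace] at h
    simpa [Matrix.diag, Complex.re_sum, hr_def] using h
  have heigsum : ∀ k, ∑ a, eig k a = 1 := by
    intro k
    have hsp := congrArg Matrix.trace (hherm k).spectral_theorem
    simp only [Unitary.conjStarAlgAut_apply, Unitary.coe_star] at hsp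
    rw [Matrix.trace_mul_cycle, Matrix.star_eq_conjTranspose] at hsp
    have hUU' : ((hherm k).eigenvectorUnitary : Matrix (Fin dA) (Fin dA) ℂ)ᴴ *
        ((hherm k).eigenvectorUnitary : Matrix (Fin dA) (Fin dA) ℂ) = 1 := by
      have := Matrix.UnitaryGroup.star_mul_self ((hherm k).eigenvectorUnitary)
      simpa [Matrix.star_eq_conjTranspose] using this
    rw [hUU', one_mul, Matrix.trace_diagonal] at hsp
    have h2 := congrArg Complex.re ((hρs k).2.symm.trans hsp)
    simpa [Complex.re_sum, heig_def] using h2.symm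
  -- nonnegativity
  have hrnn : ∀ k a, 0 ≤ r k a := by
    intro k a
    have h := (hρs k).1.re_dotProduct_nonneg (Pi.single a 1)
    simpa [dotProduct, Matrix.mulVec_single, Pi.single_apply, hr_def,
      Finset.sum_ite_eq] using h
  have heignn : ∀ k a, 0 ≤ eig k a := fun k a => (hρs k).1.eigenvalues_nonneg a
  -- final computation
  rw [DeltaZ, hSdeph, hSρ]
  have hL : ∀ b, ∑ a, dfun (a, b) * Real.logb 2 (dfun (a, b))
      = p b * Real.logb 2 (p b) + p b * ∑ a, eig b a * Real.logb 2 (eig b a) := by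
    intro b
    have : ∀ a, dfun (a, b) * Real.logb 2 (dfun (a, b))
        = eig b a * (p b * Real.logb 2 (p b)) + p b * (eig b a * Real.logb 2 (eig b a)) := by
      intro a
      rw [hd_def]
      exact aux_g_mul (p b) (eig b a) (hp b) (heignn b a)
    rw [Finset.sum_congr rfl (fun a _ => this a), Finset.sum_add_distrib,
      ← Finset.sum_mul, heigsum b, one_mul, ← Finset.mul_sum]
  have hR : ∀ b, ∑ a, rfun (a, b) * Real.logb 2 (rfun (a, b))
      = p b * Real.logb 2 (p b) + p b * ∑ a, r b a * Real.logb 2 (r b a) := by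
    intro b
    have : ∀ a, rfun (a, b) * Real.logb 2 (rfun (a, b))
        = r b a * (p b * Real.logb 2 (p b)) + p b * (r b a * Real.logb 2 (r b a)) := by
      intro a
      rw [hrf_def]
      exact aux_g_mul (p b) (r b a) (hp b) (hrnn b a)
    rw [Finset.sum_congr rfl (fun a _ => this a), Finset.sum_add_distrib,
      ← Finset.sum_mul, hrsum b, one_mul, ← Finset.mul_sum]
  have e1 : ∑ ab : Fin dA × Fin dB, rfun ab * Real.logb 2 (rfun ab)
      = ∑ b, (p b * Real.logb 2 (p b) + p b * ∑ a, r b a * Real.logb 2 (r b a)) := by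
    rw [Fintype.sum_prod_type, Finset.sum_comm]
    exact Finset.sum_congr rfl fun b _ => hR b
  have e2 : ∑ ab : Fin dA × Fin dB, dfun ab * Real.logb 2 (dfun ab)
      = ∑ b, (p b * Real.logb 2 (p b) + p b * ∑ a, eig b a * Real.logb 2 (eig b a)) := by
    rw [Fintype.sum_prod_type, Finset.sum_comm]
    exact Finset.sum_congr rfl fun b _ => hL b
  have hfin : ∀ k, relCoh (ρs k) = (∑ a, eig k a * Real.logb 2 (eig k a))
      - ∑ a, r k a * Real.logb 2 (r k a) := by
    intro k
    rw [relCoh, hSdiag k, hSk k]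
    ring
  have e3 : ∑ k, p k * relCoh (ρs k)
      = (∑ k, p k * ∑ a, eig k a * Real.logb 2 (eig k a))
        - ∑ k, p k * ∑ a, r k a * Real.logb 2 (r k a) := by
    rw [← Finset.sum_sub_distrib]
    exact Finset.sum_congr rfl fun k _ => by rw [hfin k]; ring
  rw [e1, e2, e3, Finset.sum_add_distrib, Finset.sum_add_distrib]
  ring
end
end

section
/- (Intersection of all classical-quantum lobes) Let ρ be a density matrix on ℂ^{d_A} ⊗ ℂ^{d_B}. Then ρ satisfies ρ = ∑_c (W|c⟩⟨c|W† ⊗ I_B) ρ (W|c⟩⟨c|W† ⊗ I_B) for every unitary W ∈ M_{d_A}(ℂ) (i.e. ρ is a classical-quantum state with respect to every orthonormal basis of ℂ^{d_A}) if and only if ρ = (1/d_A) I_{d_A} ⊗ ρ_B for some density matrix ρ_B on ℂ^{d_B}. -/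
open scoped Classical ComplexOrder
open Matrix Kronecker BigOperators

noncomputable section

/-- The dephasing map on `A` in the rotated basis `{W|c⟩}`:
`P_W(ρ) = ∑ c (W|c⟩⟨c|W† ⊗ I_B) ρ (W|c⟩⟨c|W† ⊗ I_B)`. -/
noncomputable def pinchW {A B : Type*} [Fintype A] [DecidableEq A] [Fintype B] [DecidableEq B]
    (W : Matrix A A ℂ) (ρ : Matrix (A × B) (A × B) ℂ) : Matrix (A × B) (A × B) ℂ :=
  ∑ c : A, ((W * Matrix.single c c (1 : ℂ) * Wᴴ) ⊗ₖ (1 : Matrix B B ℂ)) * ρ *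
    ((W * Matrix.single c c (1 : ℂ) * Wᴴ) ⊗ₖ (1 : Matrix B B ℂ))

/-! ### Auxiliary lemmas -/

section Aux

variable {A B : Type*} [Fintype A] [DecidableEq A] [Fintype B] [DecidableEq B]

lemma kron_mul_apply (X : Matrix A A ℂ) (ρ : Matrix (A × B) (A × B) ℂ)
    (a a' : A) (b b' : B) :
    ((X ⊗ₖ (1 : Matrix B B ℂ)) * ρ) (a,b) (a',b') = ∑ x, X a x * ρ (x,b) (a',b') := by
  rw [Matrix.mul_apply, Fintype.sum_prod_type]
  simp [Matrix.kroneckerMap_apply, Matrix.one_apply, ite_mul, mul_ite]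

lemma mul_kron_apply (X : Matrix A A ℂ) (ρ : Matrix (A × B) (A × B) ℂ)
    (a a' : A) (b b' : B) :
    (ρ * (X ⊗ₖ (1 : Matrix B B ℂ))) (a,b) (a',b') = ∑ y, ρ (a,b) (y,b') * X y a' := by
  rw [Matrix.mul_apply, Fintype.sum_prod_type]
  simp [Matrix.kroneckerMap_apply, Matrix.one_apply, ite_mul, mul_ite]

lemma projV_apply (W V : Matrix A A ℂ) (c a x : A) :
    (W * single c c (1:ℂ) * V) a x = W a c * V c x := by
  simp [Matrix.mul_apply, single, Finset.mul_sum,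
    mul_ite, ite_mul, Finset.sum_ite_eq, Finset.sum_ite_eq', ite_and]

lemma sum_stdBasis : ∑ c : A, single c c (1:ℂ) = 1 := by
  ext i j
  rw [Matrix.sum_apply]
  simp [single, Matrix.one_apply, ite_and, Finset.sum_ite_eq, eq_comm]

lemma sum_kron {ι : Type*} [Fintype ι] (f : ι → Matrix A A ℂ) (M : Matrix B B ℂ) :
    ∑ c, (f c ⊗ₖ M) = (∑ c, f c) ⊗ₖ M := by
  ext ⟨i,j⟩ ⟨k,l⟩
  rw [Matrix.sum_apply]
  simp [Matrix.kroneckerMap_apply, Matrix.sum_apply, Finset.sum_mul]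

lemma commute_of_orth_sum {ι N : Type*} [Fintype ι] [DecidableEq ι] [Fintype N] [DecidableEq N]
    (Q : ι → Matrix N N ℂ) (ρ : Matrix N N ℂ)
    (hQ : ∀ c d, Q c * Q d = if c = d then Q c else 0)
    (hfix : ∑ c, Q c * ρ * Q c = ρ) (d : ι) :
    Q d * ρ = ρ * Q d := by
  have key : Q d * ρ = Q d * ρ * Q d := by
    conv_lhs => rw [← hfix]
    rw [Finset.mul_sum, Finset.sum_eq_single d]
    · rw [← Matrix.mul_assoc, ← Matrix.mul_assoc, hQ d d, if_pos rfl]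
    · intro c _ hc
      rw [← Matrix.mul_assoc, ← Matrix.mul_assoc, hQ d c, if_neg (Ne.symm hc), Matrix.zero_mul,
        Matrix.zero_mul]
    · intro h; exact absurd (Finset.mem_univ d) h
  have key2 : ρ * Q d = Q d * ρ * Q d := by
    conv_lhs => rw [← hfix]
    rw [Finset.sum_mul, Finset.sum_eq_single d]
    · rw [Matrix.mul_assoc (Q d * ρ), hQ d d, if_pos rfl, Matrix.mul_assoc]
    · intro c _ hc
      rw [Matrix.mul_assoc, hQ c d, if_neg hc, Matrix.mul_zero]
    · intro h; exact absurd (Finset.mem_univ d) h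
  rw [key, key2]

lemma comm_of_pinch_fixed (W : Matrix A A ℂ) (ρ : Matrix (A × B) (A × B) ℂ)
    (hW2 : Wᴴ * W = 1) (hfix : pinchW W ρ = ρ) (c : A) :
    ((W * single c c (1:ℂ) * Wᴴ) ⊗ₖ (1 : Matrix B B ℂ)) * ρ =
      ρ * ((W * single c c (1:ℂ) * Wᴴ) ⊗ₖ (1 : Matrix B B ℂ)) := by
  refine commute_of_orth_sum
    (fun d => ((W * single d d (1:ℂ) * Wᴴ) ⊗ₖ (1 : Matrix B B ℂ))) ρ ?_ hfix c
  intro c d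
  have hmid : (W * single c c (1:ℂ) * Wᴴ) * (W * single d d (1:ℂ) * Wᴴ) =
      W * (single c c (1:ℂ) * single d d (1:ℂ)) * Wᴴ := by
    calc (W * single c c (1:ℂ) * Wᴴ) * (W * single d d (1:ℂ) * Wᴴ)
        = W * single c c (1:ℂ) * (Wᴴ * W) * single d d (1:ℂ) * Wᴴ := by
          simp only [Matrix.mul_assoc]
      _ = W * (single c c (1:ℂ) * single d d (1:ℂ)) * Wᴴ := by
          rw [hW2, Matrix.mul_one]; simp only [Matrix.mul_assoc]
  rw [← Matrix.mul_kronecker_mul, Matrix.one_mul, hmid]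
  by_cases h : c = d
  · subst h
    rw [if_pos rfl, Matrix.single_mul_single_same, mul_one]
  · rw [if_neg h, Matrix.single_mul_single_of_ne (h := h), Matrix.mul_zero, Matrix.zero_mul,
      Matrix.zero_kronecker]

end Aux

/-! ### The Hadamard-pair unitary -/

def sC : ℂ := ((Real.sqrt 2)⁻¹ : ℝ)

lemma sC_star : star sC = sC := by simp [sC]

lemma sC_star' : (starRingEnd ℂ) sC = sC := sC_star

lemma sC_mul_self : sC * sC = 2⁻¹ := by
  have h : ((Real.sqrt 2)⁻¹ * (Real.sqrt 2)⁻¹ : ℝ) = 2⁻¹ := by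
    rw [← mul_inv, Real.mul_self_sqrt (by norm_num)]
  rw [sC, ← Complex.ofReal_mul, h]
  norm_num

lemma sC_sq_ne : sC * sC ≠ 0 := by rw [sC_mul_self]; norm_num

def Whad {n : ℕ} (a0 a1 : Fin n) : Matrix (Fin n) (Fin n) ℂ :=
  Matrix.of fun i j =>
    if i = a0 then (if j = a0 then sC else if j = a1 then sC else 0)
    else if i = a1 then (if j = a0 then sC else if j = a1 then -sC else 0)
    else if i = j then 1 else 0

section WhadLemmas
variable {n : ℕ} {a0 a1 : Fin n}

lemma Wh_a0 (j : Fin n) : Whad a0 a1 a0 j = if j = a0 then sC else if j = a1 then sC else 0 := by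
  simp [Whad]

lemma Wh_a1 (h : a0 ≠ a1) (j : Fin n) :
    Whad a0 a1 a1 j = if j = a0 then sC else if j = a1 then -sC else 0 := by
  simp [Whad, Ne.symm h]

lemma Wh_other {i : Fin n} (h0 : i ≠ a0) (h1 : i ≠ a1) (j : Fin n) :
    Whad a0 a1 i j = if i = j then 1 else 0 := by
  simp [Whad, h0, h1]

lemma Whad_conjT (h : a0 ≠ a1) : (Whad a0 a1)ᴴ = Whad a0 a1 := by
  ext i j
  rw [conjTranspose_apply]
  by_cases h0 : i = a0
  · rw [h0]
    by_cases g0 : j = a0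
    · rw [g0, Wh_a0]; simp [sC_star']
    · by_cases g1 : j = a1
      · rw [g1, Wh_a1 h, Wh_a0]; simp [h, Ne.symm h, sC_star']
      · rw [Wh_other g0 g1, Wh_a0]; simp [g0, g1]
  · by_cases h1 : i = a1
    · rw [h1]
      by_cases g0 : j = a0
      · rw [g0, Wh_a0, Wh_a1 h]; simp [h, Ne.symm h, sC_star']
      · by_cases g1 : j = a1
        · rw [g1, Wh_a1 h]; simp [h, Ne.symm h, sC_star']
        · rw [Wh_other g0 g1, Wh_a1 h]; simp [g0, g1]
    · by_cases g0 : j = a0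
      · rw [g0, Wh_a0, Wh_other h0 h1]; simp [h0, h1, Ne.symm h0]
      · by_cases g1 : j = a1
        · rw [g1, Wh_a1 h, Wh_other h0 h1]; simp [h0, h1, Ne.symm h1]
        · rw [Wh_other g0 g1, Wh_other h0 h1]
          by_cases hij : i = j <;> simp [hij, eq_comm]

lemma Whad_mul_self (h : a0 ≠ a1) : Whad a0 a1 * Whad a0 a1 = 1 := by
  ext i j
  rw [Matrix.mul_apply]
  by_cases h0 : i = a0
  · rw [h0, Fintype.sum_eq_add a0 a1 h ?s1]
    case s1 =>
      intro k ⟨hk0, hk1⟩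
      rw [Wh_a0]; simp [hk0, hk1]
    rw [Wh_a0 a0, Wh_a0 a1, Wh_a0 j, Wh_a1 h j]
    by_cases g0 : j = a0
    · simp [g0, h, Ne.symm h, Matrix.one_apply, sC_mul_self]; norm_num
    · by_cases g1 : j = a1
      · simp [g0, g1, h, Ne.symm h, Matrix.one_apply, sC_mul_self]
      · simp [g0, g1, Matrix.one_apply, show a0 ≠ j from fun hh => g0 hh.symm]
  · by_cases h1 : i = a1
    · rw [h1, Fintype.sum_eq_add a0 a1 h ?s2]
      case s2 =>
        intro k ⟨hk0, hk1⟩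
        rw [Wh_a1 h]; simp [hk0, hk1]
      rw [Wh_a1 h a0, Wh_a1 h a1, Wh_a0 j, Wh_a1 h j]
      by_cases g0 : j = a0
      · simp [g0, h, Ne.symm h, Matrix.one_apply, sC_mul_self]
      · by_cases g1 : j = a1
        · simp [g0, g1, h, Ne.symm h, Matrix.one_apply, sC_mul_self]; norm_num
        · simp [g0, g1, Matrix.one_apply, show a1 ≠ j from fun hh => g1 hh.symm]
    · rw [Fintype.sum_eq_single i ?s3]
      case s3 =>
        intro k hk
        rw [Wh_other h0 h1]; simp [Ne.symm hk]
      rw [Wh_other h0 h1 i, Wh_other h0 h1 j]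
      simp [Matrix.one_apply]

end WhadLemmas

/-- **Intersection of all classical-quantum lobes.** A density matrix `ρ`
on `ℂ^{d_A} ⊗ ℂ^{d_B}` (with `d_A ≥ 2`) is a fixed point of the dephasing map `P_W` for
every unitary `W` on `A` (i.e. classical-quantum with respect to every orthonormal basis
of `ℂ^{d_A}`) if and only if `ρ = (1/d_A) I ⊗ ρ_B` for some density matrix `ρ_B`. -/
theorem fixed_by_all_pinchings_iff (dA dB : ℕ) (hdA : 2 ≤ dA)
    (ρ : Matrix (Fin dA × Fin dB) (Fin dA × Fin dB) ℂ) (hρ : IsDensity ρ) :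
    (∀ W : Matrix (Fin dA) (Fin dA) ℂ, W * Wᴴ = 1 → Wᴴ * W = 1 → pinchW W ρ = ρ) ↔
      ∃ ρB : Matrix (Fin dB) (Fin dB) ℂ, ρB.PosSemidef ∧ ρB.trace = 1 ∧
        ρ = ((dA : ℂ))⁻¹ • ((1 : Matrix (Fin dA) (Fin dA) ℂ) ⊗ₖ ρB) := by
  haveI : NeZero dA := ⟨by omega⟩
  have hdA0 : (dA : ℂ) ≠ 0 := Nat.cast_ne_zero.2 (by omega)
  constructor
  · intro H
    have hcomm : ∀ (W : Matrix (Fin dA) (Fin dA) ℂ), W * Wᴴ = 1 → Wᴴ * W = 1 → ∀ c : Fin dA,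
        ((W * single c c (1:ℂ) * Wᴴ) ⊗ₖ (1 : Matrix (Fin dB) (Fin dB) ℂ)) * ρ =
          ρ * ((W * single c c (1:ℂ) * Wᴴ) ⊗ₖ (1 : Matrix (Fin dB) (Fin dB) ℂ)) :=
      fun W h1 h2 c => comm_of_pinch_fixed W ρ h2 (H W h1 h2) c
    have hblock : ∀ (a a' : Fin dA) (b b' : Fin dB), a ≠ a' → ρ (a,b) (a',b') = 0 := by
      intro a a' b b' hne
      have h := hcomm 1 (by simp) (by simp) a
      rw [Matrix.one_mul, Matrix.conjTranspose_one, Matrix.mul_one] at h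
      have h2 : ((single a a (1:ℂ) ⊗ₖ (1 : Matrix (Fin dB) (Fin dB) ℂ)) * ρ) (a,b) (a',b')
          = (ρ * (single a a (1:ℂ) ⊗ₖ (1 : Matrix (Fin dB) (Fin dB) ℂ))) (a,b) (a',b') := by
        rw [h]
      rw [kron_mul_apply, mul_kron_apply] at h2
      simp only [single, Matrix.of_apply, ite_and, Finset.sum_ite_eq,
        Finset.mem_univ, if_true, ite_mul, mul_ite, one_mul, mul_one, zero_mul, mul_zero] at h2
      simpa [hne, Ne.symm hne] using h2
    have hsame : ∀ (a a' : Fin dA) (b b' : Fin dB), ρ (a,b) (a,b') = ρ (a',b) (a',b') := by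
      intro a a' b b'
      rcases eq_or_ne a a' with rfl | hne
      · rfl
      have hCT := Whad_conjT hne
      have hWW := Whad_mul_self hne
      have h := hcomm (Whad a a') (by rw [hCT]; exact hWW) (by rw [hCT]; exact hWW) a
      rw [hCT] at h
      have h2 : ((Whad a a' * single a a (1:ℂ) * Whad a a') ⊗ₖ
            (1 : Matrix (Fin dB) (Fin dB) ℂ) * ρ) (a,b) (a',b')
          = (ρ * ((Whad a a' * single a a (1:ℂ) * Whad a a') ⊗ₖ
            (1 : Matrix (Fin dB) (Fin dB) ℂ))) (a,b) (a',b') := by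
        rw [h]
      rw [kron_mul_apply, mul_kron_apply] at h2
      rw [Fintype.sum_eq_add a a' hne ?side1, Fintype.sum_eq_add a a' hne ?side2] at h2
      case side1 =>
        intro k ⟨hk0, hk1⟩
        rw [projV_apply, Wh_a0 a, Wh_a0 k]
        simp [hk0, hk1]
      case side2 =>
        intro k ⟨hk0, hk1⟩
        rw [projV_apply, Wh_other hk0 hk1 a, Wh_a0 a']
        simp [hk0]
      have e1 : Whad a a' a a = sC := by rw [Wh_a0]; simp
      have e2 : Whad a a' a a' = sC := by rw [Wh_a0]; simp [hne, Ne.symm hne]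
      have e3 : Whad a a' a' a = sC := by rw [Wh_a1 hne]; simp
      simp only [projV_apply, e1, e2, e3, hblock a a' b b' hne] at h2
      apply mul_left_cancel₀ sC_sq_ne
      first
      | linear_combination h2
      | linear_combination -h2
    -- build σ and conclude
    set σ : Matrix (Fin dB) (Fin dB) ℂ :=
      ρ.submatrix (fun b => ((0 : Fin dA), b)) (fun b => ((0 : Fin dA), b)) with hσdef
    have hρeq : ρ = (1 : Matrix (Fin dA) (Fin dA) ℂ) ⊗ₖ σ := by
      ext ⟨a,b⟩ ⟨a',b'⟩
      rw [Matrix.kroneckerMap_apply]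
      rcases eq_or_ne a a' with rfl | hne
      · rw [Matrix.one_apply_eq, one_mul, hσdef, Matrix.submatrix_apply]
        exact hsame a 0 b b'
      · rw [Matrix.one_apply_ne hne, zero_mul]
        exact hblock a a' b b' hne
    have hσpsd : σ.PosSemidef := hρ.1.submatrix _
    have htr : (dA : ℂ) * σ.trace = 1 := by
      have h1 : ρ.trace = 1 := hρ.2
      rw [hρeq, Matrix.trace_kronecker, Matrix.trace_one] at h1
      simpa using h1
    refine ⟨(dA : ℂ) • σ, ?_, ?_, ?_⟩
    · constructor
      · show ((dA : ℂ) • σ)ᴴ = (dA : ℂ) • σ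
        rw [Matrix.conjTranspose_smul, hσpsd.1.eq]
        norm_num
      · intro x
        exact (hσpsd.smul (a := (dA : ℂ)) (by exact_mod_cast Nat.cast_nonneg dA)).2 x
    · rw [Matrix.trace_smul, smul_eq_mul]
      exact htr
    · rw [Matrix.kronecker_smul, smul_smul, inv_mul_cancel₀ hdA0, one_smul]
      exact hρeq
  · rintro ⟨ρB, -, -, rfl⟩ W hW1 hW2
    rw [pinchW]
    have hterm : ∀ c : Fin dA,
        ((W * single c c (1:ℂ) * Wᴴ) ⊗ₖ (1 : Matrix (Fin dB) (Fin dB) ℂ)) *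
          ((dA : ℂ)⁻¹ • ((1 : Matrix (Fin dA) (Fin dA) ℂ) ⊗ₖ ρB)) *
          ((W * single c c (1:ℂ) * Wᴴ) ⊗ₖ (1 : Matrix (Fin dB) (Fin dB) ℂ)) =
        (dA : ℂ)⁻¹ • ((W * single c c (1:ℂ) * Wᴴ) ⊗ₖ ρB) := by
      intro c
      have hXX : (W * single c c (1:ℂ) * Wᴴ) * (W * single c c (1:ℂ) * Wᴴ)
          = W * single c c (1:ℂ) * Wᴴ := by
        calc (W * single c c (1:ℂ) * Wᴴ) * (W * single c c (1:ℂ) * Wᴴ)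
            = W * single c c (1:ℂ) * (Wᴴ * W) * single c c (1:ℂ) * Wᴴ := by
              simp only [Matrix.mul_assoc]
          _ = W * (single c c (1:ℂ) * single c c (1:ℂ)) * Wᴴ := by
              rw [hW2, Matrix.mul_one]; simp only [Matrix.mul_assoc]
          _ = W * single c c (1:ℂ) * Wᴴ := by
              rw [Matrix.single_mul_single_same, mul_one]
      rw [Matrix.mul_smul, Matrix.smul_mul, ← Matrix.mul_kronecker_mul, Matrix.mul_one,
        Matrix.one_mul, ← Matrix.mul_kronecker_mul, Matrix.mul_one, hXX]
    have hsum : ∑ c : Fin dA, W * single c c (1:ℂ) * Wᴴ = 1 := by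
      calc ∑ c : Fin dA, W * single c c (1:ℂ) * Wᴴ
          = (∑ c : Fin dA, W * single c c (1:ℂ)) * Wᴴ := by rw [Finset.sum_mul]
        _ = (W * ∑ c : Fin dA, single c c (1:ℂ)) * Wᴴ := by rw [Finset.mul_sum]
        _ = 1 := by rw [sum_stdBasis, Matrix.mul_one, hW1]
    rw [Finset.sum_congr rfl (fun c _ => hterm c), ← Finset.smul_sum, sum_kron, hsum]
end
end

section
/- (Vanishing of the basis-minimized monotone exactly on discord-free states) For a density matrix ρ on ℂ^{d_A} ⊗ ℂ^{d_B} define D(ρ) = inf over unitaries W ∈ M_{d_A}(ℂ) of Δ_W(ρ), where Δ_W(ρ) = S(P_W(ρ)) − S(ρ). Then D(ρ) ≥ 0, and D(ρ) = 0 if and only if there exists a unitary W ∈ M_{d_A}(ℂ) with P_W(ρ) = ρ, i.e. if and only if ρ is a classical-quantum state with respect to some orthonormal basis of ℂ^{d_A}. -/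
open scoped Classical ComplexOrder
open Matrix Kronecker BigOperators

noncomputable section

/-- The basis-independent (basis-minimized) monotone:
`D(ρ) = inf_W (S(P_W(ρ)) − S(ρ))` over all unitaries `W` on `A`. -/
noncomputable def Dmin {A B : Type*} [Fintype A] [DecidableEq A] [Fintype B] [DecidableEq B]
    (ρ : Matrix (A × B) (A × B) ℂ) : ℝ :=
  ⨅ W : Matrix.unitaryGroup A ℂ, (vnEntropy (pinchW (W : Matrix A A ℂ) ρ) - vnEntropy ρ)

set_option linter.unusedSectionVars false

open Polynomial
namespace DiscordAux

lemma gibbs_ineq (x y : ℝ) (hx : 0 ≤ x) (hy : 0 < y) :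
    x - y ≤ x * Real.log x - x * Real.log y := by
  rcases eq_or_lt_of_le hx with h0 | hxpos
  · simp [← h0]; linarith
  · have h := Real.log_le_sub_one_of_pos (x := y / x) (by positivity)
    have hlog : Real.log (y / x) = Real.log y - Real.log x :=
      Real.log_div (ne_of_gt hy) (ne_of_gt hxpos)
    rw [hlog] at h
    have := mul_le_mul_of_nonneg_left h hx
    have hx' : x * (y / x) = y := by field_simp
    nlinarith

lemma gibbs_eq (x y : ℝ) (hx : 0 ≤ x) (hy : 0 < y)
    (h : x * Real.log x - x * Real.log y = x - y) : x = y := by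
  rcases eq_or_lt_of_le hx with h0 | hxpos
  · simp [← h0] at h; linarith
  · by_contra hne
    have hratio : y / x ≠ 1 := by
      intro hr; exact hne (by field_simp at hr; linarith)
    have h2 := Real.log_lt_sub_one_of_pos (x := y / x) (by positivity) hratio
    have hlog : Real.log (y / x) = Real.log y - Real.log x :=
      Real.log_div (ne_of_gt hy) (ne_of_gt hxpos)
    rw [hlog] at h2
    have := mul_lt_mul_of_pos_left h2 hxpos
    have hx' : x * (y / x) = y := by field_simp
    nlinarith

lemma sum_mul_comp_eq_zero {ι : Type*} [Fintype ι] (a q : ι → ℝ)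
    (h : ∀ k : ℕ, ∑ j, a j * q j ^ k = 0) (g : ℝ → ℝ) :
    ∑ j, a j * g (q j) = 0 := by
  classical
  set s : Finset ℝ := Finset.image q Finset.univ with hs
  set P : ℝ[X] := Lagrange.interpolate s id g with hP
  have hg : ∀ j, g (q j) = P.eval (q j) := by
    intro j
    have := Lagrange.eval_interpolate_at_node (v := id) (r := g) (s := s)
      (Set.injOn_id _) (i := q j) (by simp [hs])
    simpa [hP] using this.symm
  calc ∑ j, a j * g (q j) = ∑ j, a j * P.eval (q j) := by simp_rw [hg]
    _ = ∑ j, ∑ k ∈ Finset.range (P.natDegree + 1), a j * (P.coeff k * q j ^ k) := by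
        refine Finset.sum_congr rfl fun j _ => ?_
        rw [Polynomial.eval_eq_sum_range, Finset.mul_sum]
    _ = ∑ k ∈ Finset.range (P.natDegree + 1), P.coeff k * ∑ j, a j * q j ^ k := by
        rw [Finset.sum_comm]
        refine Finset.sum_congr rfl fun k _ => ?_
        rw [Finset.mul_sum]; refine Finset.sum_congr rfl fun j _ => by ring
    _ = 0 := by simp [h]

variable {n : Type*} [Fintype n] [DecidableEq n]

lemma unitary_conj_pow (V : Matrix n n ℂ) (hV : V * star V = 1) (D : Matrix n n ℂ) (k : ℕ) :
    (V * D * star V) ^ k = V * D ^ k * star V := by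
  have hV' : star V * V = 1 := by
    have := (Matrix.mem_unitaryGroup_iff (A := V)).mpr hV
    exact (Matrix.mem_unitaryGroup_iff' (A := V)).mp this
  induction k with
  | zero => simp [pow_zero, hV]
  | succ k ih =>
      rw [pow_succ, pow_succ, ih]
      calc V * D ^ k * star V * (V * D * star V)
          = V * D ^ k * (star V * V) * D * star V := by noncomm_ring
        _ = V * (D ^ k * D) * star V := by rw [hV']; noncomm_ring

lemma klein {ρ σ : Matrix n n ℂ} (hρ : ρ.PosSemidef) (hσ : σ.PosSemidef)
    (hmom : ∀ k : ℕ, (ρ * σ ^ k).trace = (σ ^ (k + 1)).trace) :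
    vnEntropy ρ ≤ vnEntropy σ ∧ (vnEntropy σ = vnEntropy ρ → ρ = σ) := by
  classical
  have hρh : ρ.IsHermitian := hρ.1
  have hσh : σ.IsHermitian := hσ.1
  set p : n → ℝ := hρh.eigenvalues with hp
  set q : n → ℝ := hσh.eigenvalues with hq
  set U : Matrix n n ℂ := (hρh.eigenvectorUnitary : Matrix n n ℂ) with hU
  set V : Matrix n n ℂ := (hσh.eigenvectorUnitary : Matrix n n ℂ) with hV
  have hUU : U * star U = 1 := Matrix.mem_unitaryGroup_iff.mp hρh.eigenvectorUnitary.2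
  have hU'U : star U * U = 1 := Matrix.mem_unitaryGroup_iff'.mp hρh.eigenvectorUnitary.2
  have hVV : V * star V = 1 := Matrix.mem_unitaryGroup_iff.mp hσh.eigenvectorUnitary.2
  have hV'V : star V * V = 1 := Matrix.mem_unitaryGroup_iff'.mp hσh.eigenvectorUnitary.2
  set Dp : Matrix n n ℂ := Matrix.diagonal (fun i => (p i : ℂ)) with hDp
  set Dq : Matrix n n ℂ := Matrix.diagonal (fun j => (q j : ℂ)) with hDq
  have hρdec : ρ = U * Dp * star U := hρh.spectral_theorem
  have hσdec : σ = V * Dq * star V := hσh.spectral_theorem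
  set A : Matrix n n ℂ := star V * U with hA
  have hstarA : star A = star U * V := by rw [hA, Matrix.star_mul, star_star]
  have hAA : A * star A = 1 := by
    rw [hA, hstarA]
    calc star V * U * (star U * V) = star V * (U * star U) * V := by noncomm_ring
      _ = 1 := by rw [hUU, mul_one, hV'V]
  have hA'A : star A * A = 1 := by
    rw [hA, hstarA]
    calc star U * V * (star V * U) = star U * (V * star V) * U := by noncomm_ring
      _ = 1 := by rw [hVV, mul_one, hU'U]
  set m : n → n → ℝ := fun j i => Complex.normSq (A j i) with hm
  have hmnn : ∀ j i, 0 ≤ m j i := fun j i => Complex.normSq_nonneg _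
  have hpnn : ∀ i, 0 ≤ p i := fun i => hρ.eigenvalues_nonneg i
  have hqnn : ∀ j, 0 ≤ q j := fun j => hσ.eigenvalues_nonneg j
  have hmc : ∀ j i, (A j i) * star (A j i) = ((m j i : ℝ) : ℂ) := by
    intro j i
    rw [hm]
    simpa using Complex.mul_conj (A j i)
  have hrow : ∀ j, ∑ i, m j i = 1 := by
    intro j
    have h1 : (A * star A) j j = 1 := by rw [hAA]; simp [Matrix.one_apply]
    rw [Matrix.mul_apply] at h1
    have h2 : ∀ i, A j i * (star A) i j = ((m j i : ℝ) : ℂ) := by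
      intro i
      rw [Matrix.star_apply]
      exact hmc j i
    rw [Finset.sum_congr rfl (fun i _ => h2 i)] at h1
    exact_mod_cast h1
  have hcol : ∀ i, ∑ j, m j i = 1 := by
    intro i
    have h1 : (star A * A) i i = 1 := by rw [hA'A]; simp [Matrix.one_apply]
    rw [Matrix.mul_apply] at h1
    have h2 : ∀ j, (star A) i j * A j i = ((m j i : ℝ) : ℂ) := by
      intro j
      rw [Matrix.star_apply, mul_comm]
      exact hmc j i
    rw [Finset.sum_congr rfl (fun j _ => h2 j)] at h1
    exact_mod_cast h1
  set r : n → ℝ := fun j => ∑ i, m j i * p i with hr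
  have hconj : ∀ (M : Matrix n n ℂ), (star V * M * V).trace = M.trace := by
    intro M
    rw [Matrix.trace_mul_cycle, hVV, Matrix.one_mul]
  have hVσV : ∀ k : ℕ, star V * σ ^ k * V = Dq ^ k := by
    intro k
    rw [hσdec, unitary_conj_pow V hVV]
    calc star V * (V * Dq ^ k * star V) * V
        = (star V * V) * Dq ^ k * (star V * V) := by noncomm_ring
      _ = Dq ^ k := by rw [hV'V]; noncomm_ring
  have hVρV : star V * ρ * V = A * Dp * star A := by
    rw [hρdec, hstarA, hA]
    noncomm_ring
  have hDqk : ∀ k : ℕ, Dq ^ k = Matrix.diagonal (fun j => ((q j : ℂ)) ^ k) := by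
    intro k
    rw [hDq, Matrix.diagonal_pow]
    rfl
  have hdiag : ∀ j, (A * Dp * star A) j j = ((r j : ℝ) : ℂ) := by
    intro j
    rw [Matrix.mul_apply]
    have h3 : ∀ i, (A * Dp) j i * (star A) i j = ((m j i * p i : ℝ) : ℂ) := by
      intro i
      rw [hDp, Matrix.mul_diagonal, Matrix.star_apply]
      push_cast
      calc A j i * (p i : ℂ) * star (A j i) = (A j i * star (A j i)) * (p i : ℂ) := by ring
        _ = (m j i : ℂ) * (p i : ℂ) := by rw [hmc j i]
    rw [Finset.sum_congr rfl (fun i _ => h3 i), hr]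
    push_cast
    rfl
  have htr : ∀ k : ℕ, (ρ * σ ^ k).trace = ((∑ j, r j * q j ^ k : ℝ) : ℂ) := by
    intro k
    rw [← hconj (ρ * σ ^ k)]
    have hsplit : star V * (ρ * σ ^ k) * V = (star V * ρ * V) * (star V * σ ^ k * V) := by
      calc star V * (ρ * σ ^ k) * V = (star V * ρ) * (V * star V) * (σ ^ k * V) := by
            rw [hVV]; noncomm_ring
        _ = (star V * ρ * V) * (star V * σ ^ k * V) := by noncomm_ring
    rw [hsplit, hVρV, hVσV, hDqk, Matrix.trace, Complex.ofReal_sum]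
    refine Finset.sum_congr rfl fun j _ => ?_
    rw [Matrix.diag_apply, Matrix.mul_diagonal, hdiag j]
    push_cast
    ring
  have htrσ : ∀ k : ℕ, (σ ^ (k + 1)).trace = ((∑ j, q j * q j ^ k : ℝ) : ℂ) := by
    intro k
    rw [← hconj (σ ^ (k + 1)), hVσV (k + 1), hDqk, Matrix.trace, Complex.ofReal_sum]
    refine Finset.sum_congr rfl fun j _ => ?_
    rw [Matrix.diag_apply, Matrix.diagonal_apply_eq]
    push_cast
    ring
  have ha : ∀ k : ℕ, ∑ j, (r j - q j) * q j ^ k = 0 := by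
    intro k
    have h1 := hmom k
    rw [htr k, htrσ k] at h1
    have h2 : (∑ j, r j * q j ^ k : ℝ) = ∑ j, q j * q j ^ k := by exact_mod_cast h1
    have h3 : ∑ j, (r j - q j) * q j ^ k = (∑ j, r j * q j ^ k) - ∑ j, q j * q j ^ k := by
      rw [← Finset.sum_sub_distrib]
      exact Finset.sum_congr rfl fun j _ => by ring
    rw [h3, h2, sub_self]
  have h0' : ∀ j i, q j = 0 → m j i * p i = 0 := by
    intro j i hqj
    have H := sum_mul_comp_eq_zero (fun j => r j - q j) q ha (fun x => if x = 0 then 1 else 0)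
    have Hsum : ∑ j', (if q j' = 0 then r j' else 0) = 0 := by
      refine Eq.trans ?_ H
      refine Finset.sum_congr rfl fun j' _ => ?_
      by_cases h : q j' = 0 <;> simp [h]
    have H2 : ∑ j' ∈ Finset.univ.filter (fun j' => q j' = 0), r j' = 0 := by
      rw [Finset.sum_filter]; exact Hsum
    have hrnn : ∀ j' ∈ Finset.univ.filter (fun j' => q j' = 0), 0 ≤ r j' := by
      intro j' _
      exact Finset.sum_nonneg fun i _ => mul_nonneg (hmnn j' i) (hpnn i)
    have hrj : r j = 0 :=
      (Finset.sum_eq_zero_iff_of_nonneg hrnn).mp H2 j (by simp [hqj])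
    exact (Finset.sum_eq_zero_iff_of_nonneg
      (fun i _ => mul_nonneg (hmnn j i) (hpnn i))).mp hrj i (Finset.mem_univ i)
  have hlog : ∑ j, (r j - q j) * Real.log (q j) = 0 :=
    sum_mul_comp_eq_zero (fun j => r j - q j) q ha Real.log
  set T : n → n → ℝ :=
    fun j i => m j i * (p i * Real.log (p i) - p i * Real.log (q j) - p i + q j) with hT
  have hTnn : ∀ j i, 0 ≤ T j i := by
    intro j i
    rcases eq_or_lt_of_le (hqnn j) with hq0 | hqpos
    · rcases eq_or_ne (m j i) 0 with hm0 | hm0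
      · simp [hT, hm0]
      · have hp0 : p i = 0 := by
          rcases mul_eq_zero.mp (h0' j i hq0.symm) with h | h
          · exact absurd h hm0
          · exact h
        simp [hT, hp0, ← hq0]
    · have := gibbs_ineq (p i) (q j) (hpnn i) hqpos
      have hb : 0 ≤ p i * Real.log (p i) - p i * Real.log (q j) - p i + q j := by linarith
      exact mul_nonneg (hmnn j i) hb
  have hsum : ∑ j, ∑ i, T j i =
      (∑ i, p i * Real.log (p i)) - ∑ j, q j * Real.log (q j) := by
    have e1 : ∑ j, ∑ i, m j i * (p i * Real.log (p i)) = ∑ i, p i * Real.log (p i) := by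
      rw [Finset.sum_comm]
      refine Finset.sum_congr rfl fun i _ => ?_
      rw [← Finset.sum_mul, hcol i, one_mul]
    have e2 : ∑ j, ∑ i, m j i * (p i * Real.log (q j)) = ∑ j, q j * Real.log (q j) := by
      have h4 : ∀ j, ∑ i, m j i * (p i * Real.log (q j)) = r j * Real.log (q j) := by
        intro j
        rw [hr, Finset.sum_mul]
        exact Finset.sum_congr rfl fun i _ => by ring
      rw [Finset.sum_congr rfl fun j _ => h4 j]
      have h5 : ∑ j, (r j - q j) * Real.log (q j)
          = (∑ j, r j * Real.log (q j)) - ∑ j, q j * Real.log (q j) := by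
        rw [← Finset.sum_sub_distrib]
        exact Finset.sum_congr rfl fun j _ => by ring
      rw [h5] at hlog
      linarith
    have e3 : ∑ j, ∑ i, m j i * p i = ∑ j, ∑ i, m j i * q j := by
      have l : ∑ j, ∑ i, m j i * p i = ∑ i, p i := by
        rw [Finset.sum_comm]
        refine Finset.sum_congr rfl fun i _ => ?_
        rw [← Finset.sum_mul, hcol i, one_mul]
      have rr : ∑ j, ∑ i, m j i * q j = ∑ j, q j := by
        refine Finset.sum_congr rfl fun j _ => ?_
        rw [← Finset.sum_mul, hrow j, one_mul]
      have h00 := ha 0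
      simp only [pow_zero, mul_one] at h00
      have h6 : ∑ j, (r j - q j) = (∑ j, r j) - ∑ j, q j := by
        rw [← Finset.sum_sub_distrib]
      rw [h6] at h00
      have hrp : ∑ j, r j = ∑ i, p i := by
        rw [hr, Finset.sum_comm]
        refine Finset.sum_congr rfl fun i _ => ?_
        rw [← Finset.sum_mul, hcol i, one_mul]
      rw [l, rr]
      linarith
    calc ∑ j, ∑ i, T j i
        = (∑ j, ∑ i, m j i * (p i * Real.log (p i)))
          - (∑ j, ∑ i, m j i * (p i * Real.log (q j)))
          - ((∑ j, ∑ i, m j i * p i) - (∑ j, ∑ i, m j i * q j)) := by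
          rw [hT]
          simp only [← Finset.sum_sub_distrib]
          refine Finset.sum_congr rfl fun j _ => Finset.sum_congr rfl fun i _ => by ring
      _ = (∑ i, p i * Real.log (p i)) - ∑ j, q j * Real.log (q j) := by
          rw [e1, e2, e3]; ring
  have hEρ : vnEntropy ρ = -(∑ i, p i * Real.log (p i)) / Real.log 2 := by
    rw [vnEntropy, dif_pos hρh, neg_div, neg_inj, Finset.sum_div]
    exact Finset.sum_congr rfl fun i _ => by rw [Real.logb]; ring
  have hEσ : vnEntropy σ = -(∑ j, q j * Real.log (q j)) / Real.log 2 := by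
    rw [vnEntropy, dif_pos hσh, neg_div, neg_inj, Finset.sum_div]
    exact Finset.sum_congr rfl fun j _ => by rw [Real.logb]; ring
  have hlog2 : (0:ℝ) < Real.log 2 := Real.log_pos (by norm_num)
  have hTsum_nonneg : 0 ≤ ∑ j, ∑ i, T j i :=
    Finset.sum_nonneg fun j _ => Finset.sum_nonneg fun i _ => hTnn j i
  constructor
  · rw [hEρ, hEσ]
    have hle : -(∑ i, p i * Real.log (p i)) ≤ -(∑ j, q j * Real.log (q j)) := by
      have := hsum ▸ hTsum_nonneg
      linarith
    exact div_le_div_of_nonneg_right hle hlog2.le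
  · intro heq
    have hPQ : (∑ i, p i * Real.log (p i)) = ∑ j, q j * Real.log (q j) := by
      rw [hEρ, hEσ, div_eq_div_iff (ne_of_gt hlog2) (ne_of_gt hlog2)] at heq
      have := mul_right_cancel₀ (ne_of_gt hlog2) heq
      linarith
    have hzero : ∑ j, ∑ i, T j i = 0 := by rw [hsum, hPQ, sub_self]
    have hTz : ∀ j i, T j i = 0 := by
      intro j i
      have hinner : ∀ j' ∈ Finset.univ, (0:ℝ) ≤ ∑ i', T j' i' :=
        fun j' _ => Finset.sum_nonneg fun i' _ => hTnn j' i'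
      have hj := (Finset.sum_eq_zero_iff_of_nonneg hinner).mp hzero j (Finset.mem_univ j)
      exact (Finset.sum_eq_zero_iff_of_nonneg (fun i' _ => hTnn j i')).mp hj i (Finset.mem_univ i)
    have key : ∀ j i, A j i ≠ 0 → p i = q j := by
      intro j i hAij
      have hmne : m j i ≠ 0 := by
        rw [hm]
        simpa [Complex.normSq_eq_zero] using hAij
      rcases eq_or_lt_of_le (hqnn j) with hq0 | hqpos
      · rcases mul_eq_zero.mp (h0' j i hq0.symm) with h | h
        · exact absurd h hmne
        · rw [h, ← hq0]
      · have hb : p i * Real.log (p i) - p i * Real.log (q j) - p i + q j = 0 := by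
          have h7 := hTz j i
          rw [hT] at h7
          rcases mul_eq_zero.mp h7 with h | h
          · exact absurd h hmne
          · exact h
        exact gibbs_eq (p i) (q j) (hpnn i) hqpos (by linarith)
    have hDA : Dq * A = A * Dp := by
      ext j i
      rw [hDq, hDp, Matrix.diagonal_mul, Matrix.mul_diagonal]
      rcases eq_or_ne (A j i) 0 with h | h
      · simp [h]
      · rw [key j i h]; ring
    have hUVA : V * A = U := by
      rw [hA, ← Matrix.mul_assoc, hVV, Matrix.one_mul]
    calc ρ = U * Dp * star U := hρdec
      _ = (V * A) * Dp * star (V * A) := by rw [hUVA]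
      _ = V * (A * Dp * star A) * star V := by rw [Matrix.star_mul]; noncomm_ring
      _ = V * (Dq * (A * star A)) * star V := by rw [← hDA]; noncomm_ring
      _ = V * Dq * star V := by rw [hAA, mul_one]
      _ = σ := hσdec.symm




variable {A B : Type*} [Fintype A] [DecidableEq A] [Fintype B] [DecidableEq B]

/-- The projector onto the `c`-th rotated basis vector, tensored with the identity. -/
def proj (W : Matrix A A ℂ) (c : A) : Matrix (A × B) (A × B) ℂ :=
  (W * Matrix.single c c (1 : ℂ) * Wᴴ) ⊗ₖ (1 : Matrix B B ℂ)

lemma pinchW_eq_sum_proj (W : Matrix A A ℂ) (ρ : Matrix (A × B) (A × B) ℂ) :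
    pinchW W ρ = ∑ c : A, proj (B := B) W c * ρ * proj (B := B) W c := rfl

lemma sum_kronecker {ι : Type*} (s : Finset ι) (f : ι → Matrix A A ℂ) (Y : Matrix B B ℂ) :
    ∑ c ∈ s, (f c ⊗ₖ Y) = (∑ c ∈ s, f c) ⊗ₖ Y := by
  ext ⟨a, b⟩ ⟨a', b'⟩
  simp [Matrix.sum_apply, Matrix.kroneckerMap_apply, Finset.sum_mul]

lemma conjTranspose_kronecker (X : Matrix A A ℂ) (Y : Matrix B B ℂ) :
    (X ⊗ₖ Y)ᴴ = Xᴴ ⊗ₖ Yᴴ := by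
  ext ⟨a, b⟩ ⟨a', b'⟩
  simp [Matrix.conjTranspose_apply, Matrix.kroneckerMap_apply, mul_comm]

variable (W : Matrix A A ℂ)

lemma sum_stdBasis : ∑ c : A, Matrix.single c c (1 : ℂ) = 1 := by
  ext a b
  simp only [Matrix.sum_apply, Matrix.single, Matrix.one_apply, Matrix.of_apply]
  by_cases h : a = b
  · subst h; simp
  · simp [h, fun c => show ¬(c = a ∧ c = b) from fun ⟨h1, h2⟩ => h (h1 ▸ h2 ▸ rfl)]

variable (hW : W * Wᴴ = 1) (hW' : Wᴴ * W = 1)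
include hW'

lemma proj_mul_proj (c d : A) :
    proj (B := B) W c * proj (B := B) W d
      = if c = d then proj (B := B) W c else 0 := by
  rw [proj, proj, ← Matrix.mul_kronecker_mul, Matrix.one_mul]
  have h1 : W * Matrix.single c c (1 : ℂ) * Wᴴ * (W * Matrix.single d d 1 * Wᴴ)
      = W * (Matrix.single c c 1 * Matrix.single d d 1) * Wᴴ := by
    calc W * Matrix.single c c (1 : ℂ) * Wᴴ * (W * Matrix.single d d 1 * Wᴴ)
        = W * Matrix.single c c 1 * (Wᴴ * W) * Matrix.single d d 1 * Wᴴ := by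
          noncomm_ring
      _ = _ := by rw [hW']; noncomm_ring
  rw [h1]
  by_cases h : c = d
  · subst h
    rw [if_pos rfl, Matrix.single_mul_single_same, mul_one]
  · rw [if_neg h, Matrix.single_mul_single_of_ne (h := fun he => h he)]
    simp [Matrix.zero_kronecker]
omit hW'

include hW
lemma sum_proj : ∑ c : A, proj (B := B) W c = 1 := by
  rw [show ∀ f : A → Matrix (A × B) (A × B) ℂ, ∑ c : A, f c = ∑ c ∈ Finset.univ, f c
    from fun _ => rfl]
  simp only [proj]
  rw [sum_kronecker]
  have : ∑ c ∈ Finset.univ, W * Matrix.single c c (1 : ℂ) * Wᴴ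
      = W * (∑ c : A, Matrix.single c c (1 : ℂ)) * Wᴴ := by
    rw [Finset.mul_sum, Finset.sum_mul]
  rw [this, sum_stdBasis, Matrix.mul_one, hW, Matrix.one_kronecker_one]
omit hW

lemma proj_conjTranspose (c : A) : (proj (B := B) W c)ᴴ = proj (B := B) W c := by
  rw [proj, conjTranspose_kronecker, Matrix.conjTranspose_one]
  congr 1
  rw [Matrix.conjTranspose_mul, Matrix.conjTranspose_mul, Matrix.conjTranspose_conjTranspose]
  have : (Matrix.single c c (1 : ℂ))ᴴ = Matrix.single c c (1 : ℂ) := by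
    ext a b
    simp only [Matrix.conjTranspose_apply, Matrix.single, Matrix.of_apply]
    by_cases h1 : c = a <;> by_cases h2 : c = b <;> simp [h1, h2, and_comm]
  rw [this]
  noncomm_ring

variable {ρ : Matrix (A × B) (A × B) ℂ}

lemma pinch_posSemidef (hρ : ρ.PosSemidef) : (pinchW W ρ).PosSemidef := by
  rw [pinchW_eq_sum_proj]
  refine Finset.sum_induction _ _ (fun a b ha hb => ha.add hb) Matrix.PosSemidef.zero ?_
  intro c _
  have := hρ.mul_mul_conjTranspose_same (proj (B := B) W c)
  rwa [proj_conjTranspose] at this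

include hW'
lemma pinch_mul_proj (c : A) :
    pinchW W ρ * proj (B := B) W c = proj (B := B) W c * ρ * proj (B := B) W c := by
  rw [pinchW_eq_sum_proj, Finset.sum_mul]
  rw [Finset.sum_eq_single c]
  · rw [Matrix.mul_assoc, Matrix.mul_assoc, proj_mul_proj W hW', if_pos rfl, Matrix.mul_assoc]
  · intro d _ hdc
    rw [Matrix.mul_assoc, Matrix.mul_assoc, proj_mul_proj W hW', if_neg hdc]
    simp
  · intro h; exact absurd (Finset.mem_univ c) h

lemma proj_mul_pinch (c : A) :
    proj (B := B) W c * pinchW W ρ = proj (B := B) W c * ρ * proj (B := B) W c := by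
  rw [pinchW_eq_sum_proj, Finset.mul_sum]
  rw [Finset.sum_eq_single c]
  · rw [← Matrix.mul_assoc, ← Matrix.mul_assoc, proj_mul_proj W hW', if_pos rfl]
  · intro d _ hdc
    rw [← Matrix.mul_assoc, ← Matrix.mul_assoc, proj_mul_proj W hW',
      if_neg (fun h => hdc h.symm)]
    simp
  · intro h; exact absurd (Finset.mem_univ c) h

lemma pinch_comm_proj (c : A) :
    pinchW W ρ * proj (B := B) W c = proj (B := B) W c * pinchW W ρ := by
  rw [pinch_mul_proj W hW', proj_mul_pinch W hW']

lemma pinch_pow_comm_proj (c : A) (k : ℕ) :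
    (pinchW W ρ) ^ k * proj (B := B) W c = proj (B := B) W c * (pinchW W ρ) ^ k := by
  induction k with
  | zero => simp
  | succ k ih =>
      rw [pow_succ, Matrix.mul_assoc, pinch_comm_proj W hW', ← Matrix.mul_assoc, ih,
        Matrix.mul_assoc]

include hW
lemma pinch_moments (k : ℕ) :
    (ρ * (pinchW W ρ) ^ k).trace = ((pinchW W ρ) ^ (k + 1)).trace := by
  set σ := pinchW W ρ with hσ
  have h1 : (σ ^ (k + 1)).trace = ∑ c : A, (σ ^ k * (proj (B := B) W c * ρ * proj (B := B) W c)).trace := by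
    rw [pow_succ, hσ, pinchW_eq_sum_proj, Finset.mul_sum, Matrix.trace_sum]
  have h2 : ∀ c, (σ ^ k * (proj (B := B) W c * ρ * proj (B := B) W c)).trace
      = (σ ^ k * proj (B := B) W c * ρ).trace := by
    intro c
    have e0 : σ ^ k * (proj (B := B) W c * ρ * proj (B := B) W c)
        = (σ ^ k * proj (B := B) W c * ρ) * proj (B := B) W c := by noncomm_ring
    rw [e0, Matrix.trace_mul_comm]
    congr 1
    calc proj (B := B) W c * (σ ^ k * proj (B := B) W c * ρ)
        = (proj (B := B) W c * σ ^ k) * proj (B := B) W c * ρ := by noncomm_ring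
      _ = (σ ^ k * proj (B := B) W c) * proj (B := B) W c * ρ := by
          rw [← pinch_pow_comm_proj W hW']
      _ = σ ^ k * (proj (B := B) W c * proj (B := B) W c) * ρ := by noncomm_ring
      _ = σ ^ k * proj (B := B) W c * ρ := by rw [proj_mul_proj W hW', if_pos rfl]
  have h3 : ∑ c : A, (σ ^ k * proj (B := B) W c * ρ).trace = (σ ^ k * ρ).trace := by
    rw [← Matrix.trace_sum]
    congr 1
    rw [← Finset.sum_mul]
    have : ∑ c : A, σ ^ k * proj (B := B) W c = σ ^ k * ∑ c : A, proj (B := B) W c := by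
      rw [Finset.mul_sum]
    rw [this, sum_proj W hW, Matrix.mul_one]
  rw [h1, Finset.sum_congr rfl (fun c _ => h2 c), h3, Matrix.trace_mul_comm]

lemma pinch_trace : (pinchW W ρ).trace = ρ.trace := by
  have := pinch_moments (B := B) (ρ := ρ) W hW hW' 0
  simpa using this.symm


end DiscordAux

namespace DiscordAux

section Spectral

variable {n : Type*} [Fintype n] [DecidableEq n]

lemma trace_pow_eq {σ : Matrix n n ℂ} (h : σ.IsHermitian) (k : ℕ) :
    (σ ^ k).trace = ((∑ i, h.eigenvalues i ^ k : ℝ) : ℂ) := by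
  set V : Matrix n n ℂ := (h.eigenvectorUnitary : Matrix n n ℂ) with hV
  have hVV : V * star V = 1 := Matrix.mem_unitaryGroup_iff.mp h.eigenvectorUnitary.2
  have hV'V : star V * V = 1 := Matrix.mem_unitaryGroup_iff'.mp h.eigenvectorUnitary.2
  have hdec : σ = V * Matrix.diagonal (fun i => (h.eigenvalues i : ℂ)) * star V :=
    h.spectral_theorem
  conv_lhs => rw [hdec]
  rw [unitary_conj_pow V hVV, Matrix.trace_mul_cycle, hV'V, Matrix.one_mul, Matrix.diagonal_pow, Matrix.trace_diagonal, Complex.ofReal_sum]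
  refine Finset.sum_congr rfl fun i _ => ?_
  push_cast
  rfl

lemma vnEntropy_add_poly_abs_le {σ : Matrix n n ℂ} (hσ : σ.PosSemidef) (h1 : σ.trace = 1)
    (Q : ℝ[X]) {ε : ℝ} (hQ : ∀ x ∈ Set.Icc (0:ℝ) 1, |x * Real.logb 2 x - Q.eval x| ≤ ε) :
    |vnEntropy σ + ∑ k ∈ Finset.range (Q.natDegree + 1), Q.coeff k * ((σ ^ k).trace).re|
      ≤ (Fintype.card n : ℝ) * ε := by
  have h : σ.IsHermitian := hσ.1
  set lam : n → ℝ := h.eigenvalues with hlam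
  have hsum1 : ∑ i, lam i = 1 := by
    have h2 := trace_pow_eq h 1
    rw [pow_one, h1] at h2
    have h3 : (1:ℝ) = ∑ i, lam i ^ 1 := by exact_mod_cast h2
    simpa using h3.symm
  have hmem : ∀ i, lam i ∈ Set.Icc (0:ℝ) 1 := by
    intro i
    refine ⟨hσ.eigenvalues_nonneg i, ?_⟩
    have h3 := Finset.single_le_sum (f := lam)
      (fun j _ => hσ.eigenvalues_nonneg j) (Finset.mem_univ i)
    rw [hsum1] at h3; exact h3
  have hG : ∑ k ∈ Finset.range (Q.natDegree + 1), Q.coeff k * ((σ ^ k).trace).re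
      = ∑ i, Q.eval (lam i) := by
    have h4 : ∀ k, ((σ ^ k).trace).re = ∑ i, lam i ^ k := by
      intro k; rw [trace_pow_eq h k]; exact Complex.ofReal_re _
    calc ∑ k ∈ Finset.range (Q.natDegree + 1), Q.coeff k * ((σ ^ k).trace).re
        = ∑ k ∈ Finset.range (Q.natDegree + 1), ∑ i, Q.coeff k * lam i ^ k := by
          refine Finset.sum_congr rfl fun k _ => ?_
          rw [h4 k, Finset.mul_sum]
      _ = ∑ i, ∑ k ∈ Finset.range (Q.natDegree + 1), Q.coeff k * lam i ^ k :=
          Finset.sum_comm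
      _ = ∑ i, Q.eval (lam i) := by
          refine Finset.sum_congr rfl fun i _ => (Polynomial.eval_eq_sum_range _).symm
  have hE : vnEntropy σ = -∑ i, lam i * Real.logb 2 (lam i) := by
    rw [vnEntropy, dif_pos h]
  rw [hE, hG]
  have habs : |(-∑ i, lam i * Real.logb 2 (lam i)) + ∑ i, Q.eval (lam i)|
      = |∑ i, (Q.eval (lam i) - lam i * Real.logb 2 (lam i))| := by
    rw [Finset.sum_sub_distrib]
    ring_nf
  rw [habs]
  calc |∑ i, (Q.eval (lam i) - lam i * Real.logb 2 (lam i))|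
      ≤ ∑ i, |Q.eval (lam i) - lam i * Real.logb 2 (lam i)| :=
        Finset.abs_sum_le_sum_abs _ _
    _ ≤ ∑ _i : n, ε := by
        refine Finset.sum_le_sum fun i _ => ?_
        rw [abs_sub_comm]
        exact hQ (lam i) (hmem i)
    _ = (Fintype.card n : ℝ) * ε := by
        rw [Finset.sum_const, Finset.card_univ, nsmul_eq_mul]

end Spectral

section Compactness

variable (n : Type*) [Fintype n] [DecidableEq n]

lemma isCompact_unitaryGroup :
    IsCompact {M : Matrix n n ℂ | M ∈ Matrix.unitaryGroup n ℂ} := by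
  have hclosed : IsClosed {M : Matrix n n ℂ | M ∈ Matrix.unitaryGroup n ℂ} := by
    have heq : {M : Matrix n n ℂ | M ∈ Matrix.unitaryGroup n ℂ}
        = (fun M : Matrix n n ℂ => star M * M) ⁻¹' {1}
          ∩ (fun M : Matrix n n ℂ => M * star M) ⁻¹' {1} := by
      ext M
      simp only [Set.mem_setOf_eq, Set.mem_inter_iff, Set.mem_preimage, Set.mem_singleton_iff]
      exact Unitary.mem_iff
    rw [heq]
    exact ((isClosed_singleton.preimage
        ((continuous_id.matrix_conjTranspose).matrix_mul continuous_id)).inter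
      (isClosed_singleton.preimage
        (continuous_id.matrix_mul (continuous_id.matrix_conjTranspose))))
  have hsub : {M : Matrix n n ℂ | M ∈ Matrix.unitaryGroup n ℂ} ⊆
      Set.pi Set.univ (fun _ : n => Set.pi Set.univ
        (fun _ : n => Metric.closedBall (0 : ℂ) 1)) := by
    intro M hM
    intro i _
    intro j _
    have h1 : (M * star M) i i = 1 := by
      rw [Matrix.mem_unitaryGroup_iff.mp hM]
      simp [Matrix.one_apply]
    rw [Matrix.mul_apply] at h1
    have h2 : ∀ j', M i j' * (star M) j' i = ((Complex.normSq (M i j') : ℝ) : ℂ) := by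
      intro j'
      rw [Matrix.star_apply]
      simpa using Complex.mul_conj (M i j')
    rw [Finset.sum_congr rfl (fun j' _ => h2 j')] at h1
    have h3 : ∑ j', Complex.normSq (M i j') = 1 := by exact_mod_cast h1
    have h4 : Complex.normSq (M i j) ≤ 1 := by
      have := Finset.single_le_sum (f := fun j' => Complex.normSq (M i j'))
        (fun j' _ => Complex.normSq_nonneg _) (Finset.mem_univ j)
      rw [h3] at this; exact this
    simp only [Metric.mem_closedBall, dist_zero_right]
    have h5 : ‖M i j‖ ^ 2 ≤ 1 := by
      rw [Complex.sq_norm]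
      exact h4
    nlinarith [norm_nonneg (M i j)]
  exact IsCompact.of_isClosed_subset
    (isCompact_univ_pi fun _ => isCompact_univ_pi fun _ => isCompact_closedBall _ _)
    hclosed hsub

instance : CompactSpace (Matrix.unitaryGroup n ℂ) :=
  isCompact_iff_compactSpace.mp (isCompact_unitaryGroup n)

end Compactness

section Continuity

variable {A B : Type*} [Fintype A] [DecidableEq A] [Fintype B] [DecidableEq B]
variable (ρ : Matrix (A × B) (A × B) ℂ)

lemma continuous_pinch :
    Continuous fun Wu : Matrix.unitaryGroup A ℂ => pinchW (Wu : Matrix A A ℂ) ρ := by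
  have hcoe : Continuous fun Wu : Matrix.unitaryGroup A ℂ => (Wu : Matrix A A ℂ) :=
    continuous_subtype_val
  have hproj : ∀ c : A,
      Continuous fun Wu : Matrix.unitaryGroup A ℂ => proj (B := B) (Wu : Matrix A A ℂ) c := by
    intro c
    have hX : Continuous fun Wu : Matrix.unitaryGroup A ℂ =>
        ((Wu : Matrix A A ℂ) * Matrix.single c c (1 : ℂ) * (Wu : Matrix A A ℂ)ᴴ) :=
      (hcoe.matrix_mul continuous_const).matrix_mul hcoe.matrix_conjTranspose
    apply continuous_matrix
    rintro ⟨a, b⟩ ⟨a', b'⟩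
    exact (hX.matrix_elem a a').mul continuous_const
  simp only [pinchW_eq_sum_proj]
  exact continuous_finset_sum _ fun c _ =>
    ((hproj c).matrix_mul continuous_const).matrix_mul (hproj c)

lemma continuous_pinch_pow (k : ℕ) :
    Continuous fun Wu : Matrix.unitaryGroup A ℂ => (pinchW (Wu : Matrix A A ℂ) ρ) ^ k := by
  induction k with
  | zero => simpa [pow_zero] using continuous_const
  | succ k ih =>
      simp only [pow_succ]
      exact ih.matrix_mul (continuous_pinch ρ)

lemma continuous_G (Q : ℝ[X]) :
    Continuous fun Wu : Matrix.unitaryGroup A ℂ =>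
      ∑ k ∈ Finset.range (Q.natDegree + 1),
        Q.coeff k * (((pinchW (Wu : Matrix A A ℂ) ρ) ^ k).trace).re := by
  refine continuous_finset_sum _ fun k _ => ?_
  exact continuous_const.mul
    (Complex.continuous_re.comp ((continuous_pinch_pow ρ k).matrix_trace))

end Continuity

end DiscordAux

namespace DiscordAux

section Final

variable {A B : Type*} [Fintype A] [DecidableEq A] [Fintype B] [DecidableEq B]

lemma continuous_F {ρ : Matrix (A × B) (A × B) ℂ} (hρ : IsDensity ρ) :
    Continuous fun Wu : Matrix.unitaryGroup A ℂ => vnEntropy (pinchW (Wu : Matrix A A ℂ) ρ) := by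
  have hfc : Continuous fun x : ℝ => x * Real.logb 2 x := by
    have he : (fun x : ℝ => x * Real.logb 2 x) = fun x => (x * Real.log x) / Real.log 2 := by
      funext x; rw [Real.logb]; ring
    rw [he]
    exact Real.continuous_mul_log.div_const _
  set f : C(Set.Icc (0:ℝ) 1, ℝ) :=
    ⟨fun x => (x : ℝ) * Real.logb 2 (x : ℝ), hfc.comp continuous_subtype_val⟩ with hf
  have hex : ∀ m : ℕ, ∃ Q : ℝ[X], ∀ x ∈ Set.Icc (0:ℝ) 1,
      |x * Real.logb 2 x - Q.eval x| ≤ 1 / (m + 1) := by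
    intro m
    obtain ⟨Q, hQ⟩ := exists_polynomial_near_continuousMap 0 1 f (1 / (m + 1))
      (by positivity)
    refine ⟨Q, fun x hx => ?_⟩
    have h1 := (Q.toContinuousMapOn (Set.Icc (0:ℝ) 1) - f).norm_coe_le_norm ⟨x, hx⟩
    have h2 : (Q.toContinuousMapOn (Set.Icc (0:ℝ) 1) - f) ⟨x, hx⟩
        = Q.eval x - x * Real.logb 2 x := by
      simp [hf, Polynomial.toContinuousMapOn_apply, Polynomial.toContinuousMap_apply]
    rw [abs_sub_comm]
    calc |Q.eval x - x * Real.logb 2 x|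
        = ‖(Q.toContinuousMapOn (Set.Icc (0:ℝ) 1) - f) ⟨x, hx⟩‖ := by
          rw [h2]; exact (Real.norm_eq_abs _).symm
      _ ≤ ‖Q.toContinuousMapOn (Set.Icc (0:ℝ) 1) - f‖ := h1
      _ ≤ 1 / (m+1) := le_of_lt hQ
  choose Q hQ using hex
  have hdens : ∀ Wu : Matrix.unitaryGroup A ℂ, (pinchW (Wu : Matrix A A ℂ) ρ).PosSemidef
      ∧ (pinchW (Wu : Matrix A A ℂ) ρ).trace = 1 := by
    intro Wu
    have h1 : (Wu : Matrix A A ℂ) * (Wu : Matrix A A ℂ)ᴴ = 1 := by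
      rw [← Matrix.star_eq_conjTranspose]
      exact (Unitary.mem_iff.mp Wu.2).2
    have h2 : (Wu : Matrix A A ℂ)ᴴ * (Wu : Matrix A A ℂ) = 1 := by
      rw [← Matrix.star_eq_conjTranspose]
      exact (Unitary.mem_iff.mp Wu.2).1
    exact ⟨pinch_posSemidef _ hρ.1, by rw [pinch_trace _ h1 h2, hρ.2]⟩
  have hTU : TendstoUniformly
      (fun (m : ℕ) (Wu : Matrix.unitaryGroup A ℂ) =>
        -∑ k ∈ Finset.range ((Q m).natDegree + 1),
          (Q m).coeff k * (((pinchW (Wu : Matrix A A ℂ) ρ) ^ k).trace).re)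
      (fun Wu => vnEntropy (pinchW (Wu : Matrix A A ℂ) ρ)) Filter.atTop := by
    rw [Metric.tendstoUniformly_iff]
    intro ε hε
    have hlim : Filter.Tendsto (fun m : ℕ => (Fintype.card (A × B) : ℝ) * (1 / (m + 1)))
        Filter.atTop (nhds 0) := by
      have h3 := tendsto_one_div_add_atTop_nhds_zero_nat (𝕜 := ℝ)
      simpa using h3.const_mul (Fintype.card (A × B) : ℝ)
    filter_upwards [hlim.eventually (gt_mem_nhds hε)] with m hm Wu
    have hb := vnEntropy_add_poly_abs_le (hdens Wu).1 (hdens Wu).2 (Q m) (hQ m)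
    rw [Real.dist_eq]
    calc |vnEntropy (pinchW (Wu : Matrix A A ℂ) ρ) -
          -∑ k ∈ Finset.range ((Q m).natDegree + 1),
            (Q m).coeff k * (((pinchW (Wu : Matrix A A ℂ) ρ) ^ k).trace).re|
        = |vnEntropy (pinchW (Wu : Matrix A A ℂ) ρ) +
            ∑ k ∈ Finset.range ((Q m).natDegree + 1),
              (Q m).coeff k * (((pinchW (Wu : Matrix A A ℂ) ρ) ^ k).trace).re| := by
          rw [sub_neg_eq_add]
      _ ≤ (Fintype.card (A × B) : ℝ) * (1 / (m + 1)) := hb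
      _ < ε := hm
  exact hTU.continuous (Filter.Frequently.of_forall fun m => (continuous_G ρ (Q m)).neg)

end Final

end DiscordAux

/-- **Vanishing of the basis-minimized monotone exactly on discord-free
states.** For a density matrix `ρ` on `ℂ^{d_A} ⊗ ℂ^{d_B}` and
`D(ρ) = inf_W (S(P_W(ρ)) − S(ρ))` over unitaries `W` on `A`: `D(ρ) ≥ 0`, and `D(ρ) = 0`
iff `P_W(ρ) = ρ` for some unitary `W`, i.e. iff `ρ` is classical-quantum with respect to
some orthonormal basis of `ℂ^{d_A}`. -/
theorem Dmin_nonneg_and_eq_zero_iff (dA dB : ℕ)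
    (ρ : Matrix (Fin dA × Fin dB) (Fin dA × Fin dB) ℂ) (hρ : IsDensity ρ) :
    0 ≤ Dmin ρ ∧
      (Dmin ρ = 0 ↔ ∃ W : Matrix (Fin dA) (Fin dA) ℂ,
        W * Wᴴ = 1 ∧ Wᴴ * W = 1 ∧ pinchW W ρ = ρ) := by
  classical
  haveI : Nonempty (Matrix.unitaryGroup (Fin dA) ℂ) := ⟨1⟩
  set F : Matrix.unitaryGroup (Fin dA) ℂ → ℝ :=
    fun Wu => vnEntropy (pinchW (Wu : Matrix (Fin dA) (Fin dA) ℂ) ρ) - vnEntropy ρ with hF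
  have hD : Dmin ρ = ⨅ Wu, F Wu := rfl
  have hWprops : ∀ Wu : Matrix.unitaryGroup (Fin dA) ℂ,
      (Wu : Matrix (Fin dA) (Fin dA) ℂ) * (Wu : Matrix (Fin dA) (Fin dA) ℂ)ᴴ = 1 ∧
      (Wu : Matrix (Fin dA) (Fin dA) ℂ)ᴴ * (Wu : Matrix (Fin dA) (Fin dA) ℂ) = 1 := by
    intro Wu
    constructor
    · rw [← Matrix.star_eq_conjTranspose]; exact (Unitary.mem_iff.mp Wu.2).2
    · rw [← Matrix.star_eq_conjTranspose]; exact (Unitary.mem_iff.mp Wu.2).1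
  have hklein : ∀ Wu : Matrix.unitaryGroup (Fin dA) ℂ,
      vnEntropy ρ ≤ vnEntropy (pinchW (Wu : Matrix (Fin dA) (Fin dA) ℂ) ρ) ∧
      (vnEntropy (pinchW (Wu : Matrix (Fin dA) (Fin dA) ℂ) ρ) = vnEntropy ρ →
        ρ = pinchW (Wu : Matrix (Fin dA) (Fin dA) ℂ) ρ) := by
    intro Wu
    obtain ⟨h1, h2⟩ := hWprops Wu
    exact DiscordAux.klein hρ.1 (DiscordAux.pinch_posSemidef _ hρ.1)
      (fun k => DiscordAux.pinch_moments _ h1 h2 k)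
  have hFnn : ∀ Wu, 0 ≤ F Wu := fun Wu => sub_nonneg.mpr (hklein Wu).1
  have hDnn : 0 ≤ Dmin ρ := by rw [hD]; exact le_ciInf hFnn
  refine ⟨hDnn, ?_, ?_⟩
  · intro hD0
    have hFc : Continuous F := (DiscordAux.continuous_F hρ).sub continuous_const
    obtain ⟨W₀, -, hW₀⟩ := isCompact_univ.exists_isMinOn Set.univ_nonempty hFc.continuousOn
    have hmin : ∀ Wu, F W₀ ≤ F Wu := fun Wu => hW₀ (Set.mem_univ Wu)
    have hle : F W₀ ≤ Dmin ρ := by rw [hD]; exact le_ciInf hmin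
    have hF0 : F W₀ = 0 := le_antisymm (hD0 ▸ hle) (hFnn W₀)
    have heq : vnEntropy (pinchW (W₀ : Matrix (Fin dA) (Fin dA) ℂ) ρ) = vnEntropy ρ := by
      rw [hF] at hF0
      simpa [sub_eq_zero] using hF0
    obtain ⟨h1, h2⟩ := hWprops W₀
    exact ⟨(W₀ : Matrix (Fin dA) (Fin dA) ℂ), h1, h2, ((hklein W₀).2 heq).symm⟩
  · rintro ⟨W, h1, h2, hfix⟩
    have hmem : W ∈ Matrix.unitaryGroup (Fin dA) ℂ := by
      apply Unitary.mem_iff.mpr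
      constructor
      · rw [Matrix.star_eq_conjTranspose]; exact h2
      · rw [Matrix.star_eq_conjTranspose]; exact h1
    have hbdd : BddBelow (Set.range F) := ⟨0, by rintro x ⟨Wu, rfl⟩; exact hFnn Wu⟩
    have hle : Dmin ρ ≤ F ⟨W, hmem⟩ := by rw [hD]; exact ciInf_le hbdd _
    have hzero : F ⟨W, hmem⟩ = 0 := by rw [hF]; simp [hfix]
    linarith
end
end
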